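/- arXiv:1002.2860 — 7 statements merged into one kernel-verified Lean document; each statement's English description precedes it below -/
import Mathlib

section
/- Let ε > 0, a > 0, and let s : I → ℝ be a locally Lipschitz function on an open interval I containing 0 such that −s'(t) + s(t)² − a² ≥ 0 at almost every t ∈ I, and s(0) ≤ a·coth(aε). Then s(t) ≤ a·coth(a(ε−t)) for every t ∈ I ∩ [0, ε). -/
set_option maxHeartbeats 1000000
open Real Set MeasureTheory Filter Topology


private lemma lip_on_Icc {f : ℝ → ℝ} {I : Set ℝ} (hIopen : IsOpen I)
    (hf : LocallyLipschitzOn I f) {x : ℝ} (hx : 0 ≤ x) (hsub : Icc 0 x ⊆ I) :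
    ∃ L : ℝ, 0 ≤ L ∧ ∀ u ∈ Icc 0 x, ∀ v ∈ Icc 0 x, |f u - f v| ≤ L * |u - v| := by
  set A : Set ℝ := {y | y ∈ Icc 0 x ∧ ∃ L : ℝ, 0 ≤ L ∧
    ∀ u ∈ Icc 0 y, ∀ v ∈ Icc 0 y, |f u - f v| ≤ L * |u - v|} with hA
  have h0A : (0:ℝ) ∈ A := by
    refine ⟨⟨le_rfl, hx⟩, 0, le_rfl, ?_⟩
    intro u hu v hv
    rw [mem_Icc] at hu hv
    have h1 : u = 0 := le_antisymm hu.2 hu.1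
    have h2 : v = 0 := le_antisymm hv.2 hv.1
    simp [h1, h2]
  have hAne : A.Nonempty := ⟨0, h0A⟩
  have hbdd : BddAbove A := ⟨x, fun y hy => hy.1.2⟩
  set m := sSup A with hm
  have hm0 : 0 ≤ m := le_csSup hbdd h0A
  have hmx : m ≤ x := csSup_le hAne (fun y hy => hy.1.2)
  obtain ⟨K, V, hV, hK⟩ := hf (hsub ⟨hm0, hmx⟩)
  rw [nhdsWithin_eq_nhds.2 (hIopen.mem_nhds (hsub ⟨hm0, hmx⟩))] at hV
  obtain ⟨r, hr, hball⟩ := Metric.mem_nhds_iff.1 hV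
  obtain ⟨y, hyA, hy⟩ := exists_lt_of_lt_csSup hAne (show m - r < m by linarith)
  obtain ⟨L, hL, hLip⟩ := hyA.2
  have hym : y ≤ m := le_csSup hbdd hyA
  have hy0 : 0 ≤ y := hyA.1.1
  set z := min (m + r/2) x with hz
  have hz0 : 0 ≤ z := le_min (by linarith) hx
  have hzm2 : z ≤ m + r/2 := min_le_left _ _
  have hVmem : ∀ p : ℝ, m - r < p → p ≤ z → p ∈ V := by
    intro p h1 h2
    apply hball
    rw [Metric.mem_ball, Real.dist_eq, abs_lt]
    constructor <;> nlinarith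
  have hzA : z ∈ A := by
    refine ⟨⟨hz0, min_le_right _ _⟩, L + K, by positivity, ?_⟩
    have key : ∀ u ∈ Icc 0 z, ∀ v ∈ Icc 0 z, u ≤ v →
        |f u - f v| ≤ (L + (K:ℝ)) * |u - v| := by
      intro u hu v hv huv
      have habs : |u - v| = v - u := by rw [abs_sub_comm, abs_of_nonneg (by linarith)]
      rcases le_total v y with hvy | hvy
      · have h1 := hLip u ⟨hu.1, le_trans huv hvy⟩ v ⟨hv.1, hvy⟩
        have : (0:ℝ) ≤ (K:ℝ) * |u - v| := by positivity
        nlinarith [abs_nonneg (u - v)]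
      · rcases le_total u y with huy | huy
        · have h1 := hLip u ⟨hu.1, huy⟩ y ⟨hy0, le_rfl⟩
          have hyz : y ≤ z := le_min (by linarith) hyA.1.2
          have h2 := hK.dist_le_mul y (hVmem y (by linarith) hyz) v (hVmem v (by linarith) hv.2)
          rw [Real.dist_eq, Real.dist_eq] at h2
          have e1 : |u - y| = y - u := by rw [abs_sub_comm, abs_of_nonneg (by linarith)]
          have e2 : |y - v| = v - y := by rw [abs_sub_comm, abs_of_nonneg (by linarith)]
          rw [e1] at h1; rw [e2] at h2; rw [habs]
          calc |f u - f v| ≤ |f u - f y| + |f y - f v| := by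
                have := abs_add_le (f u - f y) (f y - f v); simpa using this
            _ ≤ L * (y - u) + (K:ℝ) * (v - y) := add_le_add h1 h2
            _ ≤ (L + (K:ℝ)) * (v - u) := by nlinarith [K.coe_nonneg]
        · have h2 := hK.dist_le_mul u (hVmem u (by linarith) hu.2) v (hVmem v (by linarith) hv.2)
          rw [Real.dist_eq, Real.dist_eq] at h2
          nlinarith [abs_nonneg (u - v), hL]
    intro u hu v hv
    rcases le_total u v with h | h
    · exact key u hu v hv h
    · rw [abs_sub_comm (f u), abs_sub_comm u]; exact key v hv u hu h
  have hzm : z ≤ m := le_csSup hbdd hzA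
  have hmex : m = x := by
    by_contra h
    have hmltx : m < x := lt_of_le_of_ne hmx h
    have : m < z := lt_min (by linarith) hmltx
    linarith
  have hzx : z = x := by rw [hz, hmex]; exact min_eq_right (by linarith)
  obtain ⟨_, L', hL', h⟩ := hzA
  exact ⟨L', hL', by rwa [hzx] at h⟩


private lemma key_gronwall {x L C : ℝ} (hx : 0 ≤ x) (hL : 0 ≤ L) (hC : 0 ≤ C) {g : ℝ → ℝ}
    (hLip : ∀ u ∈ Icc 0 x, ∀ v ∈ Icc 0 x, |g u - g v| ≤ L * |u - v|)
    (h0 : g 0 ≤ 0)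
    (hae : ∀ᵐ t ∂(volume : Measure ℝ), t ∈ Ico 0 x →
      ∃ d : ℝ, HasDerivAt g d t ∧ (0 < g t → d ≤ C * g t)) :
    g x ≤ 0 := by
  have hgcont : ContinuousOn g (Icc 0 x) := by
    have h1 : LipschitzOnWith (Real.toNNReal L) g (Icc 0 x) := by
      apply LipschitzOnWith.of_dist_le_mul
      intro u hu v hv
      rw [Real.dist_eq, Real.dist_eq, Real.coe_toNNReal L hL]
      exact hLip u hu v hv
    exact h1.continuousOn
  suffices H : ∀ η : ℝ, 0 < η → g x ≤ η * ((L + 2) * Real.exp ((C + 1) * x)) by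
    by_contra hgx
    push_neg at hgx
    set K := (L + 2) * Real.exp ((C + 1) * x) with hKdef
    have hKpos : 0 < K := by positivity
    have h1 := H (g x / (2 * K)) (by positivity)
    have h2 : g x / (2 * K) * K = g x / 2 := by field_simp
    rw [h2] at h1
    linarith
  intro η hη
  have hN : volume {t : ℝ | ¬ (t ∈ Ico 0 x →
      ∃ d : ℝ, HasDerivAt g d t ∧ (0 < g t → d ≤ C * g t))} = 0 := ae_iff.1 hae
  obtain ⟨U, hNU, hUopen, hUvol⟩ := Set.exists_isOpen_lt_of_lt _ (ENNReal.ofReal η)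
    (by rw [hN]; exact ENNReal.ofReal_pos.2 hη)
  have hUfin : volume U ≠ ⊤ := ne_top_of_lt (lt_of_lt_of_le hUvol le_top)
  set v : ℝ → ℝ := fun t => (volume (U ∩ Ioc 0 t)).toReal with hvdef
  have hvfin : ∀ t, volume (U ∩ Ioc 0 t) ≠ ⊤ :=
    fun t => ne_top_of_le_ne_top hUfin (measure_mono inter_subset_left)
  have hvnonneg : ∀ t, 0 ≤ v t := fun t => ENNReal.toReal_nonneg
  have hvmono : ∀ {t u : ℝ}, t ≤ u → v t ≤ v u := fun {t u} h =>
    ENNReal.toReal_mono (hvfin u) (measure_mono (inter_subset_inter_right _ (Ioc_subset_Ioc_right h)))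
  have hvlip : ∀ {t u : ℝ}, t ≤ u → v u ≤ v t + (u - t) := by
    intro t u h
    have hsub : U ∩ Ioc 0 u ⊆ (U ∩ Ioc 0 t) ∪ Ioc t u := by
      rintro p ⟨hpU, hp0, hpu⟩
      rcases le_or_gt p t with hpt | hpt
      · exact Or.inl ⟨hpU, hp0, hpt⟩
      · exact Or.inr ⟨hpt, hpu⟩
    have h1 : volume (U ∩ Ioc 0 u) ≤ volume (U ∩ Ioc 0 t) + ENNReal.ofReal (u - t) := by
      refine le_trans (measure_mono hsub) (le_trans (measure_union_le _ _) ?_)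
      rw [Real.volume_Ioc]
    calc v u ≤ (volume (U ∩ Ioc 0 t) + ENNReal.ofReal (u - t)).toReal :=
        ENNReal.toReal_mono (ENNReal.add_ne_top.2 ⟨hvfin t, ENNReal.ofReal_ne_top⟩) h1
      _ = v t + (u - t) := by
          rw [ENNReal.toReal_add (hvfin t) ENNReal.ofReal_ne_top,
            ENNReal.toReal_ofReal (by linarith)]
  have hvcont : Continuous v := by
    have h1 : LipschitzWith 1 v := by
      apply LipschitzWith.of_dist_le_mul
      intro t u
      rw [Real.dist_eq, Real.dist_eq, NNReal.coe_one, one_mul]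
      rcases le_total t u with h | h
      · have h1 := hvmono h; have h2 := hvlip h
        rw [abs_sub_comm, abs_of_nonneg (by linarith), abs_sub_comm, abs_of_nonneg (by linarith)]
        linarith
      · have h1 := hvmono h; have h2 := hvlip h
        rw [abs_of_nonneg (by linarith), abs_of_nonneg (by linarith)]
        linarith
    exact h1.continuous
  have hvle : ∀ t, v t ≤ η := by
    intro t
    have h1 : v t ≤ (volume U).toReal :=
      ENNReal.toReal_mono hUfin (measure_mono inter_subset_left)
    have h2 : (volume U).toReal ≤ η := by
      have h3 := ENNReal.toReal_mono ENNReal.ofReal_ne_top hUvol.le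
      rwa [ENNReal.toReal_ofReal hη.le] at h3
    linarith
  set ψ : ℝ → ℝ := fun t => (η + (L + 1) * v t) * Real.exp ((C + 1) * t) with hψdef
  have hψ_eq : ∀ τ : ℝ, ψ τ = (η + (L + 1) * v τ) * Real.exp ((C + 1) * τ) := fun τ => rfl
  have hψpos : ∀ t, 0 < ψ t := fun t => mul_pos (by nlinarith [hvnonneg t]) (Real.exp_pos _)
  have hψcont : Continuous ψ :=
    (continuous_const.add (continuous_const.mul hvcont)).mul
      (Real.continuous_exp.comp (continuous_const.mul continuous_id))
  have hmain : Icc 0 x ⊆ {t | g t ≤ ψ t} := by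
    have hclosed : IsClosed ({t | g t ≤ ψ t} ∩ Icc 0 x) := by
      have hc : ContinuousOn (fun t => g t - ψ t) (Icc 0 x) := hgcont.sub hψcont.continuousOn
      have h2 : IsClosed (Icc 0 x ∩ (fun t => g t - ψ t) ⁻¹' Iic 0) :=
        hc.preimage_isClosed_of_isClosed isClosed_Icc isClosed_Iic
      have h3 : {t | g t ≤ ψ t} ∩ Icc 0 x = Icc 0 x ∩ (fun t => g t - ψ t) ⁻¹' Iic 0 := by
        ext t
        simp only [mem_inter_iff, mem_setOf_eq, mem_preimage, mem_Iic, sub_nonpos]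
        tauto
      rw [h3]; exact h2
    refine hclosed.Icc_subset_of_forall_exists_gt ?_ ?_
    · show g 0 ≤ ψ 0
      have := hψpos 0; linarith
    · rintro t ⟨htS, ht0, htx⟩ y hy
      rw [mem_Ioi] at hy
      set y' := min y x with hy'def
      have hty' : t < y' := lt_min hy htx
      have hmem : Ioc t y' ∈ 𝓝[>] t := Ioc_mem_nhdsGT_of_mem ⟨le_rfl, hty'⟩
      have hmem' : ∀ᶠ u in 𝓝[>] t, u ∈ Ioc t y' := eventually_mem_set.2 hmem
      rw [mem_setOf_eq] at htS
      suffices hev : ∀ᶠ u in 𝓝[>] t, u ∈ Ioc t y' → g u ≤ ψ u by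
        obtain ⟨z, hz1, hz2⟩ := (hmem'.and hev).exists
        exact ⟨z, hz2 hz1, hz1.1, le_trans hz1.2 (min_le_left _ _)⟩
      by_cases htU : t ∈ U
      · obtain ⟨r, hr, hball⟩ := Metric.isOpen_iff.1 hUopen t htU
        filter_upwards [Ioo_mem_nhdsGT_of_mem
          (show t ∈ Ico t (t + r/2) from ⟨le_rfl, by linarith⟩)] with u hu huy
        have hux : u ≤ x := le_trans huy.2 (min_le_right _ _)
        have htu : t < u := hu.1
        have hIocU : Ioc t u ⊆ U := by
          intro p hp
          apply hball
          rw [Metric.mem_ball, Real.dist_eq, abs_lt]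
          constructor
          · nlinarith [hp.1]
          · nlinarith [hp.2, hu.2]
        have hvinc : v t + (u - t) ≤ v u := by
          have hdisj : Disjoint (U ∩ Ioc 0 t) (Ioc t u) := by
            apply Set.disjoint_left.2
            rintro p ⟨_, _, hpt⟩ ⟨hpt', _⟩
            exact absurd hpt (not_le.2 hpt')
          have hsub2 : (U ∩ Ioc 0 t) ∪ Ioc t u ⊆ U ∩ Ioc 0 u := by
            rintro p (⟨h1, h2, h3⟩ | hp)
            · exact ⟨h1, h2, le_trans h3 htu.le⟩
            · exact ⟨hIocU hp, lt_of_le_of_lt ht0 hp.1, hp.2⟩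
          have h4 := measure_mono (μ := (volume : Measure ℝ)) hsub2
          rw [measure_union hdisj measurableSet_Ioc, Real.volume_Ioc] at h4
          have h5 := ENNReal.toReal_mono (hvfin u) h4
          rw [ENNReal.toReal_add (hvfin t) ENNReal.ofReal_ne_top,
            ENNReal.toReal_ofReal (by linarith)] at h5
          linarith
        have hgub : g u - g t ≤ L * (u - t) := by
          have h1 := hLip u ⟨by linarith, hux⟩ t ⟨ht0, htx.le⟩
          rw [abs_of_nonneg (by linarith : (0:ℝ) ≤ u - t)] at h1
          calc g u - g t ≤ |g u - g t| := le_abs_self _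
            _ ≤ L * (u - t) := h1
        have hexp1 : (1:ℝ) ≤ Real.exp ((C + 1) * t) := by
          have := Real.add_one_le_exp ((C + 1) * t)
          nlinarith
        have hexpmono : Real.exp ((C + 1) * t) ≤ Real.exp ((C + 1) * u) :=
          Real.exp_le_exp.2 (by nlinarith)
        have hψu : ψ t + (L + 1) * (u - t) ≤ ψ u := by
          have hf1 : (0:ℝ) ≤ η + (L + 1) * v t + (L + 1) * (u - t) := by
            nlinarith [hvnonneg t]
          have h1 : (η + (L + 1) * v t + (L + 1) * (u - t)) * Real.exp ((C + 1) * t) ≤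
              (η + (L + 1) * v u) * Real.exp ((C + 1) * u) := by
            apply mul_le_mul _ hexpmono (by positivity) _
            · nlinarith
            · nlinarith [hvnonneg u]
          have h2 : ψ t + (L + 1) * (u - t) ≤
              (η + (L + 1) * v t + (L + 1) * (u - t)) * Real.exp ((C + 1) * t) := by
            rw [hψ_eq t]
            nlinarith [mul_nonneg (mul_nonneg (by linarith : (0:ℝ) ≤ L + 1)
              (by linarith : (0:ℝ) ≤ u - t)) (by linarith : (0:ℝ) ≤ Real.exp ((C + 1) * t) - 1)]
          rw [hψ_eq u] at *
          linarith
        nlinarith [hgub, hψu]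
      · have hP : t ∈ Ico 0 x → ∃ d : ℝ, HasDerivAt g d t ∧ (0 < g t → d ≤ C * g t) := by
          by_contra hP
          exact htU (hNU hP)
        obtain ⟨d, hd, hdle⟩ := hP ⟨ht0, htx⟩
        rcases lt_or_eq_of_le htS with hlt | heq
        · have hc : ContinuousWithinAt (fun u => g u - ψ u) (Icc 0 x) t :=
            (hgcont.sub hψcont.continuousOn) t ⟨ht0, htx.le⟩
          have hpre := hc (Iio_mem_nhds (show g t - ψ t < 0 by linarith))
          obtain ⟨O, hOopen, htO, hOsub⟩ := mem_nhdsWithin.1 hpre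
          filter_upwards [eventually_mem_set.2 (nhdsWithin_le_nhds (hOopen.mem_nhds htO))]
            with u huO huy
          have hu2 : u ∈ O ∩ Icc 0 x := ⟨huO, ⟨by linarith [huy.1], le_trans huy.2 (min_le_right _ _)⟩⟩
          have := hOsub hu2
          simp only [mem_preimage, mem_Iio] at this
          linarith
        · have hgt0 : 0 < g t := heq ▸ hψpos t
          have hdlt : d < (C + 1) * ψ t := by
            have h1 := hdle hgt0
            have h2 := hψpos t
            rw [heq] at h1
            nlinarith
          have hslope := (hd.hasDerivWithinAt (s := Ioi t)).limsup_slope_le'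
            (notMem_Ioi.2 le_rfl) hdlt
          filter_upwards [hslope, self_mem_nhdsWithin] with u hu htu huy
          rw [mem_Ioi] at htu
          rw [slope_def_field] at hu
          have h1 : g u - g t ≤ (C + 1) * ψ t * (u - t) := by
            have h2 := (div_lt_iff₀ (by linarith : (0:ℝ) < u - t)).1 hu
            linarith
          have hee : 1 + (C + 1) * (u - t) ≤ Real.exp ((C + 1) * (u - t)) := by
            have := Real.add_one_le_exp ((C + 1) * (u - t)); linarith
          have hψu : ψ t * (1 + (C + 1) * (u - t)) ≤ ψ u := by
            have he1 : ψ t * Real.exp ((C + 1) * (u - t)) ≤ ψ u := by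
              have e2 : Real.exp ((C + 1) * t) * Real.exp ((C + 1) * (u - t)) =
                  Real.exp ((C + 1) * u) := by rw [← Real.exp_add]; ring_nf
              calc ψ t * Real.exp ((C + 1) * (u - t))
                  = (η + (L + 1) * v t) * Real.exp ((C + 1) * u) := by
                    rw [hψ_eq t, mul_assoc, e2]
                _ ≤ (η + (L + 1) * v u) * Real.exp ((C + 1) * u) := by
                    apply mul_le_mul_of_nonneg_right _ (Real.exp_pos _).le
                    nlinarith [hvmono htu.le]
                _ = ψ u := (hψ_eq u).symm
            exact le_trans (mul_le_mul_of_nonneg_left hee (hψpos t).le) he1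
          have e3 : ψ t * (1 + (C + 1) * (u - t)) = ψ t + (C + 1) * ψ t * (u - t) := by ring
          linarith
  have hfinal := hmain (right_mem_Icc.2 hx)
  rw [mem_setOf_eq] at hfinal
  have hψx : ψ x ≤ η * ((L + 2) * Real.exp ((C + 1) * x)) := by
    rw [hψ_eq x]
    have h1 : η + (L + 1) * v x ≤ η * (L + 2) := by nlinarith [hvle x]
    calc (η + (L + 1) * v x) * Real.exp ((C + 1) * x)
        ≤ η * (L + 2) * Real.exp ((C + 1) * x) :=
          mul_le_mul_of_nonneg_right h1 (Real.exp_pos _).le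
      _ = η * ((L + 2) * Real.exp ((C + 1) * x)) := by ring
  linarith


/-- The hyperbolic cotangent. -/
noncomputable def coth (x : ℝ) : ℝ := Real.cosh x / Real.sinh x

private lemma lip_mul {S : Set ℝ} {f₁ f₂ : ℝ → ℝ} {K₁ K₂ M₁ M₂ : ℝ}
    (h₁ : ∀ u ∈ S, ∀ v ∈ S, |f₁ u - f₁ v| ≤ K₁ * |u - v|)
    (h₂ : ∀ u ∈ S, ∀ v ∈ S, |f₂ u - f₂ v| ≤ K₂ * |u - v|)
    (hM₁ : ∀ u ∈ S, |f₁ u| ≤ M₁) (hM₂ : ∀ u ∈ S, |f₂ u| ≤ M₂) :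
    ∀ u ∈ S, ∀ v ∈ S, |f₁ u * f₂ u - f₁ v * f₂ v| ≤ (M₁ * K₂ + M₂ * K₁) * |u - v| := by
  intro u hu v hv
  have e : f₁ u * f₂ u - f₁ v * f₂ v = f₁ u * (f₂ u - f₂ v) + f₂ v * (f₁ u - f₁ v) := by ring
  calc |f₁ u * f₂ u - f₁ v * f₂ v| ≤ |f₁ u * (f₂ u - f₂ v)| + |f₂ v * (f₁ u - f₁ v)| := by
        rw [e]; exact abs_add_le _ _
    _ = |f₁ u| * |f₂ u - f₂ v| + |f₂ v| * |f₁ u - f₁ v| := by rw [abs_mul, abs_mul]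
    _ ≤ M₁ * (K₂ * |u - v|) + M₂ * (K₁ * |u - v|) :=
        add_le_add
          (mul_le_mul (hM₁ u hu) (h₂ u hu v hv) (abs_nonneg _)
            (le_trans (abs_nonneg _) (hM₁ u hu)))
          (mul_le_mul (hM₂ v hv) (h₁ u hu v hv) (abs_nonneg _)
            (le_trans (abs_nonneg _) (hM₂ v hv)))
    _ = (M₁ * K₂ + M₂ * K₁) * |u - v| := by ring

theorem stmt_2 (ε a : ℝ) (hε : 0 < ε) (ha : 0 < a)
    (I : Set ℝ) (hIopen : IsOpen I) (hIconn : I.OrdConnected) (h0I : (0 : ℝ) ∈ I)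
    (s : ℝ → ℝ) (hs : LocallyLipschitzOn I s)
    (hineq : ∀ᵐ t ∂(volume : Measure ℝ), t ∈ I →
      ∃ d : ℝ, HasDerivAt s d t ∧ 0 ≤ -d + (s t) ^ 2 - a ^ 2)
    (h0 : s 0 ≤ a * coth (a * ε)) :
    ∀ t ∈ I ∩ Ico 0 ε, s t ≤ a * coth (a * (ε - t)) := by
  rintro x ⟨hxI, hx0, hxε⟩
  have hIcc : Icc 0 x ⊆ I := hIconn.out h0I hxI
  obtain ⟨Ls, hLs0, hLs⟩ := lip_on_Icc hIopen hs hx0 hIcc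
  set w : ℝ → ℝ := fun t => Real.sinh (a * (ε - t)) with hwdef
  set c : ℝ → ℝ := fun t => Real.cosh (a * (ε - t)) with hcdef
  set g : ℝ → ℝ := fun t => s t * (w t * w t) - a * (c t * w t) with hgdef
  have hg_eq : ∀ t, g t = s t * (w t * w t) - a * (c t * w t) := fun t => rfl
  set wm := Real.sinh (a * (ε - x)) with hwm_def
  set wM := Real.sinh (a * ε) with hwM_def
  set cM := Real.cosh (a * ε) with hcM_def
  have hwm : 0 < wm := Real.sinh_pos_iff.2 (by nlinarith)
  have hwMpos : 0 < wM := Real.sinh_pos_iff.2 (by positivity)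
  have hcM1 : 1 ≤ cM := Real.one_le_cosh _
  have hwMcM : wM ≤ cM := (Real.sinh_lt_cosh _).le
  have hwlb : ∀ t ∈ Icc 0 x, wm ≤ w t := fun t ht =>
    Real.sinh_le_sinh.2 (by nlinarith [ht.2])
  have hwub : ∀ t ∈ Icc 0 x, w t ≤ wM := fun t ht =>
    Real.sinh_le_sinh.2 (by nlinarith [ht.1])
  have hwpos : ∀ t ∈ Icc 0 x, 0 < w t := fun t ht => lt_of_lt_of_le hwm (hwlb t ht)
  have hcub : ∀ t ∈ Icc 0 x, c t ≤ cM := by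
    intro t ht
    apply Real.cosh_le_cosh.2
    rw [abs_of_nonneg (by nlinarith [ht.2] : (0:ℝ) ≤ a * (ε - t)),
      abs_of_nonneg (by positivity : (0:ℝ) ≤ a * ε)]
    nlinarith [ht.1]
  have hcpos : ∀ t, 0 < c t := fun t => Real.cosh_pos _
  -- derivatives
  have hwderiv : ∀ t, HasDerivAt w (-(a * c t)) t := by
    intro t
    have h1 : HasDerivAt (fun t : ℝ => a * (ε - t)) (-a) t := by
      have h2 := ((hasDerivAt_id t).const_sub ε).const_mul a
      simpa using h2
    have h3 := (Real.hasDerivAt_sinh (a * (ε - t))).comp t h1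
    exact h3.congr_deriv (by simp only [hcdef]; ring)
  have hcderiv : ∀ t, HasDerivAt c (-(a * w t)) t := by
    intro t
    have h1 : HasDerivAt (fun t : ℝ => a * (ε - t)) (-a) t := by
      have h2 := ((hasDerivAt_id t).const_sub ε).const_mul a
      simpa using h2
    have h3 := (Real.hasDerivAt_cosh (a * (ε - t))).comp t h1
    exact h3.congr_deriv (by simp only [hwdef]; ring)
  -- Lipschitz bounds for w and c on Icc 0 x
  have hwlip : ∀ u ∈ Icc 0 x, ∀ v ∈ Icc 0 x, |w u - w v| ≤ (a * cM) * |u - v| := by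
    intro u hu v hv
    have h1 := Convex.norm_image_sub_le_of_norm_hasDerivWithin_le
      (f := w) (f' := fun t => -(a * c t)) (C := a * cM) (s := Icc 0 x)
      (fun t ht => (hwderiv t).hasDerivWithinAt)
      (fun t ht => by
        rw [Real.norm_eq_abs, abs_neg, abs_of_nonneg (by positivity)]
        nlinarith [hcub t ht, hcpos t])
      (convex_Icc 0 x) hv hu
    rw [Real.norm_eq_abs, Real.norm_eq_abs] at h1
    exact h1
  have hclip : ∀ u ∈ Icc 0 x, ∀ v ∈ Icc 0 x, |c u - c v| ≤ (a * cM) * |u - v| := by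
    intro u hu v hv
    have h1 := Convex.norm_image_sub_le_of_norm_hasDerivWithin_le
      (f := c) (f' := fun t => -(a * w t)) (C := a * cM) (s := Icc 0 x)
      (fun t ht => (hcderiv t).hasDerivWithinAt)
      (fun t ht => by
        rw [Real.norm_eq_abs, abs_neg, abs_of_nonneg (by nlinarith [hwpos t ht])]
        nlinarith [hwub t ht, hwpos t ht])
      (convex_Icc 0 x) hv hu
    rw [Real.norm_eq_abs, Real.norm_eq_abs] at h1
    exact h1
  -- bound on s
  set Ms := |s 0| + Ls * x with hMs_def
  have hMs0 : 0 ≤ Ms := add_nonneg (abs_nonneg _) (mul_nonneg hLs0 hx0)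
  have hsbound : ∀ t ∈ Icc 0 x, |s t| ≤ Ms := by
    intro t ht
    have h1 := hLs t ht 0 (left_mem_Icc.2 hx0)
    rw [sub_zero, abs_of_nonneg ht.1] at h1
    have h2 : |s t| ≤ |s t - s 0| + |s 0| := by
      have := abs_add_le (s t - s 0) (s 0); simpa using this
    nlinarith [ht.2, mul_le_mul_of_nonneg_left ht.2 hLs0]
  -- abs bounds for w, c
  have hwabs : ∀ t ∈ Icc 0 x, |w t| ≤ wM := fun t ht => by
    rw [abs_of_pos (hwpos t ht)]; exact hwub t ht
  have hcabs : ∀ t ∈ Icc 0 x, |c t| ≤ cM := fun t ht => by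
    rw [abs_of_pos (hcpos t)]; exact hcub t ht
  -- Lipschitz of g
  have hwwlip := lip_mul hwlip hwlip hwabs hwabs
  have hwwabs : ∀ t ∈ Icc 0 x, |w t * w t| ≤ wM * wM := fun t ht => by
    rw [abs_mul]
    exact mul_le_mul (hwabs t ht) (hwabs t ht) (abs_nonneg _) hwMpos.le
  have hswwlip := lip_mul hLs hwwlip hsbound hwwabs
  have hcwlip := lip_mul hclip hwlip hcabs hwabs
  set LG := (Ms * (wM * (a * cM) + wM * (a * cM)) + wM * wM * Ls) +
      a * (cM * (a * cM) + wM * (a * cM)) with hLG_def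
  have hLG0 : 0 ≤ LG := by positivity
  have hglip : ∀ u ∈ Icc 0 x, ∀ v ∈ Icc 0 x, |g u - g v| ≤ LG * |u - v| := by
    intro u hu v hv
    have h1 := hswwlip u hu v hv
    have h2 := hcwlip u hu v hv
    have e : g u - g v = (s u * (w u * w u) - s v * (w v * w v)) -
        a * (c u * w u - c v * w v) := by rw [hg_eq, hg_eq]; ring
    have e2 : |g u - g v| ≤ |s u * (w u * w u) - s v * (w v * w v)| +
        a * |c u * w u - c v * w v| := by
      rw [e]
      refine le_trans (abs_sub _ _) ?_
      rw [abs_mul, abs_of_pos ha]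
    rw [hLG_def]
    nlinarith [abs_nonneg (u - v)]
  -- bound on g
  set Mg := Ms * (wM * wM) + a * (cM * wM) with hMg_def
  have hMg0 : 0 ≤ Mg := by positivity
  have hgbound : ∀ t ∈ Icc 0 x, |g t| ≤ Mg := by
    intro t ht
    rw [hg_eq]
    refine le_trans (abs_sub _ _) ?_
    simp only [abs_mul, abs_of_pos ha]
    have h1 := hsbound t ht; have h2 := hwabs t ht; have h3 := hcabs t ht
    have h4 := abs_nonneg (s t); have h5 := abs_nonneg (w t); have h6 := abs_nonneg (c t)
    rw [hMg_def]
    have p1 : |s t| * (|w t| * |w t|) ≤ Ms * (wM * wM) :=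
      mul_le_mul h1 (mul_le_mul h2 h2 h5 (le_trans h5 h2)) (by positivity) hMs0
    have p2 : |c t| * |w t| ≤ cM * wM := mul_le_mul h3 h2 h5 (le_trans h6 h3)
    have p3 := mul_le_mul_of_nonneg_left p2 ha.le
    linarith
  set C := Mg / wm ^ 2 with hC_def
  have hC0 : 0 ≤ C := by positivity
  -- initial condition
  have hsinh0 : 0 < Real.sinh (a * ε) := Real.sinh_pos_iff.2 (by positivity)
  have h0g : g 0 ≤ 0 := by
    rw [hg_eq]
    have hw0 : w 0 = Real.sinh (a * ε) := by rw [hwdef]; norm_num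
    have hc0 : c 0 = Real.cosh (a * ε) := by rw [hcdef]; norm_num
    rw [hw0, hc0]
    rw [coth] at h0
    have h1 : s 0 * Real.sinh (a * ε) ≤ a * Real.cosh (a * ε) := by
      have h2 := mul_le_mul_of_nonneg_right h0 hsinh0.le
      rw [mul_assoc, div_mul_cancel₀ _ hsinh0.ne'] at h2
      exact h2
    nlinarith [hsinh0]
  -- a.e. hypothesis for g
  have haeg : ∀ᵐ t ∂(volume : Measure ℝ), t ∈ Ico 0 x →
      ∃ d : ℝ, HasDerivAt g d t ∧ (0 < g t → d ≤ C * g t) := by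
    filter_upwards [hineq] with t hts htmem
    have htIcc : t ∈ Icc 0 x := ⟨htmem.1, htmem.2.le⟩
    obtain ⟨d, hd, hdle⟩ := hts (hIcc htIcc)
    refine ⟨d * (w t * w t) + s t * (-(a * c t) * w t + w t * -(a * c t)) -
      a * (-(a * w t) * w t + c t * -(a * c t)), ?_, ?_⟩
    · exact (hd.mul ((hwderiv t).mul (hwderiv t))).sub
        (((hcderiv t).mul (hwderiv t)).const_mul a)
    · intro hgt0
      have hd2 : d ≤ s t ^ 2 - a ^ 2 := by linarith
      set W := w t with hW_def
      set Cc := c t with hCc_def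
      have hWlb : wm ≤ W := hwlb t htIcc
      have hWpos : 0 < W := hwpos t htIcc
      have hgteq : g t = W * (s t * W - a * Cc) := by rw [hg_eq]; ring
      set p := s t * W - a * Cc with hp_def
      have hppos : 0 < p := by
        by_contra hp
        push_neg at hp
        rw [hgteq] at hgt0
        nlinarith
      have hWp : W * p ≤ Mg := by
        have := hgbound t htIcc
        rw [hgteq] at this
        exact le_trans (le_abs_self _) this
      have hstep1 : d * (W * W) + s t * (-(a * Cc) * W + W * -(a * Cc)) -
          a * (-(a * W) * W + Cc * -(a * Cc)) ≤ p ^ 2 := by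
        nlinarith [mul_nonneg (sub_nonneg.2 hd2) (mul_self_nonneg W)]
      have hstep2 : p ^ 2 ≤ C * g t := by
        rw [hgteq, hC_def, div_mul_eq_mul_div, le_div_iff₀ (by positivity : (0:ℝ) < wm ^ 2)]
        nlinarith [mul_le_mul_of_nonneg_right hWp (mul_pos hWpos hppos).le,
          mul_le_mul_of_nonneg_right (mul_le_mul_of_nonneg_right hWlb hppos.le)
            (mul_pos hwm hppos).le]
      linarith
  -- apply the key lemma
  have hgx := key_gronwall hx0 hLG0 hC0 hglip h0g haeg
  -- conclude
  have hwx : w x = wm := rfl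
  have hgx2 : s x * (w x * w x) ≤ a * (c x * w x) := by
    rw [hg_eq] at hgx; linarith
  rw [coth]
  have hwxpos : 0 < w x := by rw [hwx]; exact hwm
  have h1 : s x ≤ a * c x / w x := by
    rw [le_div_iff₀ hwxpos]
    nlinarith [hwxpos]
  calc s x ≤ a * c x / w x := h1
    _ = a * (Real.cosh (a * (ε - x)) / Real.sinh (a * (ε - x))) := by
        rw [hcdef, hwdef]; ring
end

section
/- Let ε > 0, b > 0, and let s : [0, ε) → ℝ be a locally Lipschitz function such that −s'(t) + s(t)² − b² ≤ 0 at almost every t ∈ [0, ε). Then s(0) ≤ b·coth(bε). -/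
open Real Set MeasureTheory Filter Topology
open scoped NNReal ENNReal

/-- Core lemma. -/
lemma core_lip {f : ℝ → ℝ} {K : ℝ≥0} {a b c : ℝ} (hab : a ≤ b)
    (hf : LipschitzOnWith K f (Icc a b))
    (hd : ∀ᵐ t ∂(volume : Measure ℝ), t ∈ Ioo a b → ∃ d, HasDerivAt f d t ∧ d ≤ c) :
    f b - f a ≤ c * (b - a) := by
  obtain ⟨g, glip, hfg⟩ := hf.extend_real
  set K' : ℝ := (K : ℝ) + |c| with hK'
  have hK0 : (0:ℝ) ≤ (K : ℝ) := K.coe_nonneg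
  have hKK' : (K : ℝ) ≤ K' := by simp [hK', abs_nonneg]
  have hcK' : c ≤ K' := by
    have h1 : c ≤ |c| := le_abs_self c
    linarith
  set h : ℝ → ℝ := fun t => K' * t - g t with hh
  have hmono : Monotone h := by
    intro x y hxy
    have h1 : |g x - g y| ≤ (K:ℝ) * |x - y| := by
      have := glip.dist_le_mul x y
      rwa [Real.dist_eq, Real.dist_eq] at this
    have h2 : g y - g x ≤ (K:ℝ) * (y - x) := by
      have := (abs_le.1 h1).1
      rw [abs_of_nonpos (by linarith : x - y ≤ 0)] at this
      linarith
    have h3 : (K:ℝ) * (y - x) ≤ K' * (y - x) :=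
      mul_le_mul_of_nonneg_right hKK' (by linarith)
    simp only [hh]
    linarith
  set F := hmono.stieltjesFunction with hF
  set μ := F.measure with hμ
  have hcont : Continuous h := by
    have : Continuous g := glip.continuous
    fun_prop
  have hFg : ∀ x, F x = h x := by
    intro x
    rw [hF, hmono.stieltjesFunction_eq]
    exact rightLim_eq_of_tendsto
      ((hcont.tendsto x).mono_left nhdsWithin_le_nhds)
  have hae : ∀ᵐ t ∂(volume : Measure ℝ), t ∈ Ioo a b →
      ENNReal.ofReal (K' - c) ≤ μ.rnDeriv volume t := by
    filter_upwards [hmono.ae_hasDerivAt, hd, Measure.rnDeriv_lt_top μ volume] with t h1 h2 h3 ht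
    obtain ⟨d, hder, hdc⟩ := h2 ht
    have hgd : HasDerivAt g d t := by
      apply hder.congr_of_eventuallyEq
      filter_upwards [Icc_mem_nhds ht.1 ht.2] with x hx
      exact (hfg hx).symm
    have hhd : HasDerivAt h (K' - d) t := by
      have := ((hasDerivAt_id t).const_mul K').sub hgd
      simp only [mul_one] at this
      exact this
    have heq := hhd.unique h1
    have hge : K' - c ≤ ((μ.rnDeriv volume t).toReal) := by rw [← heq]; linarith
    rw [← ENNReal.ofReal_toReal h3.ne]
    exact ENNReal.ofReal_le_ofReal hge
  have key : ENNReal.ofReal ((K' - c) * (b - a)) ≤ ENNReal.ofReal (h b - h a) := by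
    calc ENNReal.ofReal ((K' - c) * (b - a))
        = ∫⁻ _ in Ioo a b, ENNReal.ofReal (K' - c) ∂volume := by
          rw [setLIntegral_const, Real.volume_Ioo,
            ← ENNReal.ofReal_mul (by linarith : (0:ℝ) ≤ K' - c)]
      _ ≤ ∫⁻ t in Ioo a b, μ.rnDeriv volume t ∂volume := by
          refine setLIntegral_mono_ae (μ.measurable_rnDeriv volume).aemeasurable ?_
          filter_upwards [hae] with t ht h't
          exact ht h't
      _ ≤ μ (Ioo a b) := Measure.setLIntegral_rnDeriv_le _
      _ ≤ μ (Ioc a b) := measure_mono Ioo_subset_Ioc_self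
      _ = ENNReal.ofReal (F b - F a) := F.measure_Ioc a b
      _ = ENNReal.ofReal (h b - h a) := by rw [hFg, hFg]
  have hreal : (K' - c) * (b - a) ≤ h b - h a :=
    (ENNReal.ofReal_le_ofReal_iff (by have := hmono hab; linarith)).1 key
  have ea : g a = f a := (hfg (left_mem_Icc.2 hab)).symm
  have eb : g b = f b := (hfg (right_mem_Icc.2 hab)).symm
  simp only [hh] at hreal
  nlinarith [hreal]

/-- Local version: a locally Lipschitz function on `[a,b]` whose derivative is a.e. `≤ c`
on `(a,b)` satisfies `f b - f a ≤ c * (b - a)`. -/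
lemma core_loc {f : ℝ → ℝ} {a b c : ℝ} (hab : a ≤ b)
    (hf : LocallyLipschitzOn (Icc a b) f)
    (hd : ∀ᵐ t ∂(volume : Measure ℝ), t ∈ Ioo a b → ∃ d, HasDerivAt f d t ∧ d ≤ c) :
    f b - f a ≤ c * (b - a) := by
  set S : Set ℝ := {x | f x - f a ≤ c * (x - a)} with hS
  have hcont : ContinuousOn f (Icc a b) := hf.continuousOn
  have hclosed : IsClosed (S ∩ Icc a b) := by
    have : S ∩ Icc a b = Icc a b ∩ (fun x => f x - f a - c * (x - a)) ⁻¹' Iic 0 := by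
      ext x
      simp only [hS, mem_inter_iff, mem_setOf_eq, mem_preimage, mem_Iic]
      constructor
      · rintro ⟨h1, h2⟩; exact ⟨h2, by linarith⟩
      · rintro ⟨h1, h2⟩; exact ⟨by linarith, h1⟩
    rw [this]
    exact ContinuousOn.preimage_isClosed_of_isClosed
      (by fun_prop (disch := exact hcont)) isClosed_Icc isClosed_Iic
  have hmem : Icc a b ⊆ S := by
    apply hclosed.Icc_subset_of_forall_exists_gt
    · simp [hS]
    · rintro x ⟨hxS, hxab⟩ y hy
      -- local Lipschitz at x
      obtain ⟨K, U, hU, hlip⟩ := hf ⟨hxab.1, le_of_lt hxab.2⟩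
      obtain ⟨δ, hδ, hball⟩ := Metric.mem_nhdsWithin_iff.1 hU
      set z : ℝ := min y (min b (x + δ/2)) with hz
      have hxz : x < z := by
        apply lt_min hy (lt_min hxab.2 (by linarith))
      have hsub : Icc x z ⊆ U := by
        intro w hw
        apply hball
        constructor
        · rw [Metric.mem_ball, Real.dist_eq, abs_of_nonneg (by linarith [hw.1])]
          have : z ≤ x + δ/2 := le_trans (min_le_right _ _) (min_le_right _ _)
          linarith [hw.2]
        · exact ⟨le_trans hxab.1 hw.1, le_trans hw.2 (le_trans (min_le_right _ _) (min_le_left _ _))⟩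
      have hlip' : LipschitzOnWith K f (Icc x z) := hlip.mono hsub
      have hstep : f z - f x ≤ c * (z - x) := by
        apply core_lip (le_of_lt hxz) hlip'
        filter_upwards [hd] with t ht h't
        apply ht
        have hzb : z ≤ b := le_trans (min_le_right _ _) (min_le_left _ _)
        exact ⟨lt_of_le_of_lt hxab.1 h't.1, lt_of_lt_of_le h't.2 hzb⟩
      refine ⟨z, ?_, hxz, min_le_left _ _⟩
      simp only [hS, mem_setOf_eq] at hxS ⊢
      linarith
  have := hmem (right_mem_Icc.2 hab)
  simpa [hS] using this

set_option maxHeartbeats 1000000 in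
theorem stmt_3 (ε b : ℝ) (hε : 0 < ε) (hb : 0 < b)
    (s : ℝ → ℝ) (hs : LocallyLipschitzOn (Ico 0 ε) s)
    (hineq : ∀ᵐ t ∂(volume : Measure ℝ), t ∈ Ico 0 ε →
      ∃ d : ℝ, HasDerivWithinAt s d (Ico 0 ε) t ∧ -d + (s t) ^ 2 - b ^ 2 ≤ 0) :
    s 0 ≤ b * coth (b * ε) := by
  by_contra hcon
  push_neg at hcon
  set X : ℝ := Real.exp (b * ε) with hX
  set E : ℝ := Real.exp (2 * b * ε) with hE
  have hXpos : 0 < X := Real.exp_pos _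
  have hXX : X * X = E := by rw [hX, hE, ← Real.exp_add]; ring_nf
  have hXY : X * Real.exp (-(b * ε)) = 1 := by
    rw [hX, ← Real.exp_add]; simp
  have hE1 : 1 < E := by
    rw [hE, ← Real.exp_zero]
    exact Real.exp_lt_exp.2 (by positivity)
  have hsh : 0 < Real.sinh (b * ε) := Real.sinh_pos_iff.2 (by positivity)
  have h1 : b * Real.cosh (b * ε) < s 0 * Real.sinh (b * ε) := by
    rw [coth, ← mul_div_assoc] at hcon
    exact (div_lt_iff₀ hsh).1 hcon
  rw [Real.cosh_eq, Real.sinh_eq] at h1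
  have hkey : b * (E + 1) < s 0 * (E - 1) := by
    have h1' : b * (X + Real.exp (-(b * ε))) < s 0 * (X - Real.exp (-(b * ε))) := by
      rw [hX]; linarith
    have h2 := mul_lt_mul_of_pos_right h1' hXpos
    have e1 : b * (X + Real.exp (-(b * ε))) * X = b * (X * X) + b * (X * Real.exp (-(b * ε))) := by
      ring
    have e2 : s 0 * (X - Real.exp (-(b * ε))) * X
        = s 0 * (X * X) - s 0 * (X * Real.exp (-(b * ε))) := by ring
    rw [e1, e2, hXX, hXY] at h2
    linarith
  have hsb : b < s 0 := by nlinarith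
  -- the transformed function
  set u : ℝ → ℝ := fun t => (1 / (2 * b)) * (Real.log (s t + b) - Real.log (s t - b)) with hu
  have hupos : ∀ {σ : ℝ}, b < σ → 0 < (1 / (2 * b)) * (Real.log (σ + b) - Real.log (σ - b)) := by
    intro σ hσ
    have h2 : Real.log (σ - b) < Real.log (σ + b) := Real.log_lt_log (by linarith) (by linarith)
    have h2b : (0:ℝ) < 1 / (2 * b) := by positivity
    nlinarith
  have hu0 : u 0 < ε := by
    have hr1 : s 0 + b < E * (s 0 - b) := by nlinarith
    have hlog : Real.log (s 0 + b) - Real.log (s 0 - b) < 2 * b * ε := by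
      rw [← Real.log_div (by linarith) (by linarith : s 0 - b ≠ 0),
        Real.log_lt_iff_lt_exp (div_pos (by linarith) (by linarith)), ← hE,
        div_lt_iff₀ (by linarith)]
      nlinarith
    have h2b : (0:ℝ) < 1 / (2 * b) := by positivity
    calc u 0 = (1 / (2 * b)) * (Real.log (s 0 + b) - Real.log (s 0 - b)) := rfl
      _ < (1 / (2 * b)) * (2 * b * ε) := by
          exact mul_lt_mul_of_pos_left hlog h2b
      _ = ε := by field_simp
  -- the good set
  set S : Set ℝ := {t | t ∈ Ico 0 ε ∧ ∀ r ∈ Icc 0 t, b < s r} with hSdef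
  have h0S : (0:ℝ) ∈ S := by
    refine ⟨⟨le_refl 0, hε⟩, fun r hr => ?_⟩
    have : r = 0 := le_antisymm hr.2 hr.1
    rw [this]; exact hsb
  -- the key decay estimate
  have key : ∀ t ∈ S, u t + t ≤ u 0 := by
    rintro t ⟨htIco, hts⟩
    rcases eq_or_lt_of_le htIco.1 with h0t | h0t
    · rw [← h0t]; simp
    have htε : t < ε := htIco.2
    have hIccsub : Icc 0 t ⊆ Ico 0 ε := fun r hr => ⟨hr.1, lt_of_le_of_lt hr.2 htε⟩
    have hcs : ContinuousOn s (Icc 0 t) := hs.continuousOn.mono hIccsub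
    -- min and max of s on [0, t]
    obtain ⟨r0, hr0mem, hr0min⟩ :=
      isCompact_Icc.exists_isMinOn (nonempty_Icc.2 (le_of_lt h0t)) hcs
    obtain ⟨r1, hr1mem, hr1max⟩ :=
      isCompact_Icc.exists_isMaxOn (nonempty_Icc.2 (le_of_lt h0t)) hcs
    set m : ℝ := s r0 with hm
    set M : ℝ := s r1 with hM
    have hbm : b < m := hts r0 hr0mem
    have hmM : ∀ r ∈ Icc 0 t, s r ∈ Icc m M := fun r hr => ⟨hr0min hr, hr1max hr⟩
    have hmM' : m ≤ M := (hmM r0 hr0mem).2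
    -- the outer function
    set φ : ℝ → ℝ := fun x => (1 / (2 * b)) * (Real.log (x + b) - Real.log (x - b)) with hφ
    -- φ is Lipschitz on [m, M]
    set Cr : ℝ := (1 / (2 * b)) * (1 / (m + b) + 1 / (m - b)) with hCr
    have hCrpos : 0 < Cr := by
      have : 0 < m + b := by linarith
      have : 0 < m - b := by linarith
      positivity
    set C : ℝ≥0 := Real.toNNReal Cr with hC
    have hφlip : LipschitzOnWith C φ (Icc m M) := by
      set φ' : ℝ → ℝ := fun x => (1 / (2 * b)) * (1 / (x + b) - 1 / (x - b)) with hφ'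
      apply (convex_Icc m M).lipschitzOnWith_of_nnnorm_hasDerivWithin_le (f' := φ')
      · intro x hx
        have hx1 : (0:ℝ) < x + b := by linarith [hx.1]
        have hx2 : (0:ℝ) < x - b := by linarith [hx.1]
        have d1 : HasDerivAt (fun y : ℝ => Real.log (y + b)) (1 / (x + b)) x := by
          simpa using (((hasDerivAt_id x).add_const b).log hx1.ne')
        have d2 : HasDerivAt (fun y : ℝ => Real.log (y - b)) (1 / (x - b)) x := by
          simpa using (((hasDerivAt_id x).sub_const b).log hx2.ne')
        exact (((d1.sub d2).const_mul _).hasDerivWithinAt)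
      · intro x hx
        have hx1 : (0:ℝ) < x + b := by linarith [hx.1]
        have hx2 : (0:ℝ) < x - b := by linarith [hx.1]
        rw [← NNReal.coe_le_coe, coe_nnnorm, Real.norm_eq_abs, hC,
          Real.coe_toNNReal _ (le_of_lt hCrpos)]
        have e1 : 1 / (x + b) ≤ 1 / (m + b) :=
          one_div_le_one_div_of_le (by linarith) (by linarith [hx.1])
        have e2 : 1 / (x - b) ≤ 1 / (m - b) :=
          one_div_le_one_div_of_le (by linarith) (by linarith [hx.1])
        have e3 : |1 / (x + b) - 1 / (x - b)| ≤ 1 / (m + b) + 1 / (m - b) := by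
          rw [abs_sub_le_iff]
          constructor
          · have i1 : (0:ℝ) < 1 / (x - b) := by positivity
            have i2 : (0:ℝ) < 1 / (m - b) := one_div_pos.2 (by linarith)
            linarith
          · have i1 : (0:ℝ) < 1 / (x + b) := by positivity
            have i2 : (0:ℝ) < 1 / (m + b) := one_div_pos.2 (by linarith)
            linarith
        rw [hCr, abs_mul, abs_of_nonneg (by positivity : (0:ℝ) ≤ 1 / (2 * b))]
        exact mul_le_mul_of_nonneg_left e3 (by positivity)
    -- local Lipschitz of r ↦ u r + r on [0, t]
    have hloc : LocallyLipschitzOn (Icc 0 t) (fun r => u r + r) := by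
      intro x hx
      obtain ⟨K, U, hU, hlip⟩ := hs (hIccsub hx)
      refine ⟨C * K + 1, U ∩ Icc 0 t, ?_, ?_⟩
      · exact inter_mem (nhdsWithin_mono x hIccsub hU) self_mem_nhdsWithin
      · rw [lipschitzOnWith_iff_dist_le_mul]
        intro p hp q hq
        have hcomp : LipschitzOnWith (C * K) (φ ∘ s) (U ∩ Icc 0 t) :=
          hφlip.comp (hlip.mono inter_subset_left) (fun r hr => hmM r hr.2)
        have hd : dist (φ (s p)) (φ (s q)) ≤ (C * K : ℝ≥0) * dist p q :=
          lipschitzOnWith_iff_dist_le_mul.1 hcomp p hp q hq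
        have hup : u p = φ (s p) := rfl
        have huq : u q = φ (s q) := rfl
        calc dist (u p + p) (u q + q) ≤ dist (u p) (u q) + dist p q := dist_add_add_le _ _ _ _
          _ ≤ (C * K : ℝ≥0) * dist p q + dist p q := by
              rw [hup, huq]; exact add_le_add_left hd _
          _ = ((C * K + 1 : ℝ≥0) : ℝ) * dist p q := by push_cast; ring
    -- the a.e. derivative estimate
    have hae : ∀ᵐ r ∂(volume : Measure ℝ), r ∈ Ioo 0 t →
        ∃ d', HasDerivAt (fun w => u w + w) d' r ∧ d' ≤ 0 := by
      filter_upwards [hineq] with r hr hrIoo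
      have hrIco : r ∈ Ico 0 ε := ⟨le_of_lt hrIoo.1, lt_trans hrIoo.2 htε⟩
      obtain ⟨d, hder, hineq'⟩ := hr hrIco
      have hder' : HasDerivAt s d r :=
        hder.hasDerivAt (Ico_mem_nhds hrIoo.1 (lt_trans hrIoo.2 htε))
      have hσ : b < s r := hts r ⟨le_of_lt hrIoo.1, le_of_lt hrIoo.2⟩
      have hσ1 : (0:ℝ) < s r + b := by linarith
      have hσ2 : (0:ℝ) < s r - b := by linarith
      have d1 : HasDerivAt (fun w => Real.log (s w + b)) (d / (s r + b)) r :=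
        (hder'.add_const b).log hσ1.ne'
      have d2 : HasDerivAt (fun w => Real.log (s w - b)) (d / (s r - b)) r :=
        (hder'.sub_const b).log hσ2.ne'
      refine ⟨(1 / (2 * b)) * (d / (s r + b) - d / (s r - b)) + 1, ?_, ?_⟩
      · have hD := ((d1.sub d2).const_mul (1 / (2 * b))).add (hasDerivAt_id r)
        simp only [hu]
        exact hD
      · have hd2 : (s r) ^ 2 - b ^ 2 ≤ d := by linarith
        have h3 : (1 / (2 * b)) * (d / (s r + b) - d / (s r - b))
            = -(d / ((s r + b) * (s r - b))) := by
          field_simp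
          ring
        rw [h3]
        have h4 : (0:ℝ) < (s r + b) * (s r - b) := by positivity
        have h5 : (s r + b) * (s r - b) ≤ d := by nlinarith
        have h6 : 1 ≤ d / ((s r + b) * (s r - b)) := (one_le_div h4).2 h5
        linarith
    have := core_loc (le_of_lt h0t) hloc hae
    simp only [zero_add, mul_zero, zero_mul] at this
    linarith
  -- every element of S is < u 0, in particular bounded
  have hub : ∀ t ∈ S, t < u 0 := by
    intro t ht
    have h1 := key t ht
    have h2 : b < s t := ht.2 t ⟨ht.1.1, le_refl t⟩
    have h3 : 0 < u t := hupos h2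
    linarith
  have hbdd : BddAbove S := ⟨u 0, fun t ht => le_of_lt (hub t ht)⟩
  set T : ℝ := sSup S with hT
  have hT0 : 0 ≤ T := le_csSup hbdd h0S
  have hTu0 : T ≤ u 0 := csSup_le ⟨0, h0S⟩ (fun t ht => le_of_lt (hub t ht))
  have hTε : T < ε := lt_of_le_of_lt hTu0 hu0
  have hdown : ∀ t, 0 ≤ t → t < T → t ∈ S := by
    intro t ht0 htT
    obtain ⟨t', ht'S, htt'⟩ := exists_lt_of_lt_csSup ⟨0, h0S⟩ htT
    exact ⟨⟨ht0, lt_trans htt' ht'S.1.2⟩,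
      fun r hr => ht'S.2 r ⟨hr.1, le_trans hr.2 (le_of_lt htt')⟩⟩
  have hsTb : b < s T := by
    rcases eq_or_lt_of_le hT0 with h0T | h0T
    · rw [← h0T]; exact hsb
    · set E0 : ℝ := Real.exp (2 * b * u 0) with hE0
      have hE0pos : 0 < E0 := Real.exp_pos _
      have hineqt : ∀ r ∈ Ioo (0:ℝ) T, s r + b ≤ E0 * (s r - b) := by
        intro r hr
        have hrS : r ∈ S := hdown r (le_of_lt hr.1) hr.2
        have hσ : b < s r := hrS.2 r ⟨le_of_lt hr.1, le_refl r⟩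
        have h1 : u r ≤ u 0 := by linarith [key r hrS, hr.1.le]
        have h2 : Real.log ((s r + b) / (s r - b)) ≤ 2 * b * u 0 := by
          rw [Real.log_div (by linarith) (by linarith : s r - b ≠ 0)]
          have h2b : (0:ℝ) < 2 * b := by positivity
          have := mul_le_mul_of_nonneg_left h1 (le_of_lt h2b)
          calc Real.log (s r + b) - Real.log (s r - b)
              = (2 * b) * u r := by rw [hu]; field_simp
            _ ≤ (2 * b) * u 0 := this
            _ = 2 * b * u 0 := by ring
        have h3 : (s r + b) / (s r - b) ≤ E0 := by
          rw [← Real.exp_log (show (0:ℝ) < (s r + b) / (s r - b) from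
            div_pos (by linarith) (by linarith)), hE0]
          exact Real.exp_le_exp.2 h2
        rw [div_le_iff₀ (by linarith : (0:ℝ) < s r - b)] at h3
        linarith
      have hne : (𝓝[Ioo (0:ℝ) T] T).NeBot := right_nhdsWithin_Ioo_neBot h0T
      have hsub2 : Ioo (0:ℝ) T ⊆ Ico 0 ε := fun r hr => ⟨le_of_lt hr.1, lt_trans hr.2 hTε⟩
      have htend : Tendsto s (𝓝[Ioo (0:ℝ) T] T) (𝓝 (s T)) :=
        (hs.continuousOn.continuousWithinAt ⟨hT0, hTε⟩).mono_left (nhdsWithin_mono _ hsub2)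
      have hge : b ≤ s T := by
        apply ge_of_tendsto htend
        filter_upwards [self_mem_nhdsWithin] with r hr
        exact le_of_lt ((hdown r (le_of_lt hr.1) hr.2).2 r ⟨le_of_lt hr.1, le_refl r⟩)
      have hlim : s T + b ≤ E0 * (s T - b) := by
        apply le_of_tendsto_of_tendsto (htend.add_const b) ((htend.sub_const b).const_mul E0)
        filter_upwards [self_mem_nhdsWithin] with r hr
        exact hineqt r hr
      nlinarith
  have hTS : T ∈ S := by
    refine ⟨⟨hT0, hTε⟩, fun r hr => ?_⟩
    rcases eq_or_lt_of_le hr.2 with hrT | hrT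
    · rw [hrT]; exact hsTb
    · exact (hdown r hr.1 hrT).2 r ⟨hr.1, le_refl r⟩
  -- push beyond T
  have hev : ∀ᶠ r in 𝓝[Ico 0 ε] T, b < s r :=
    (hs.continuousOn.continuousWithinAt ⟨hT0, hTε⟩).eventually (eventually_gt_nhds hsTb)
  obtain ⟨δ, hδ, hball⟩ := Metric.mem_nhdsWithin_iff.1 hev
  set T' : ℝ := min (T + δ / 2) ((T + ε) / 2) with hT'
  have hTT' : T < T' := lt_min (by linarith) (by linarith)
  have hT'ε : T' < ε := lt_of_le_of_lt (min_le_right _ _) (by linarith)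
  have hT'S : T' ∈ S := by
    refine ⟨⟨by linarith, hT'ε⟩, fun r hr => ?_⟩
    rcases le_or_gt r T with hrT | hrT
    · exact hTS.2 r ⟨hr.1, hrT⟩
    · apply hball
      constructor
      · rw [Metric.mem_ball, Real.dist_eq, abs_of_pos (by linarith : (0:ℝ) < r - T)]
        have : T' ≤ T + δ / 2 := min_le_left _ _
        linarith [hr.2]
      · exact ⟨hr.1, lt_of_le_of_lt hr.2 hT'ε⟩
  linarith [le_csSup hbdd hT'S]
end

section
/- Let ε > 0, b > 0, and let i : [0, ε) → ℝ be a locally Lipschitz function such that −i'(t) + i(t)² − b² ≤ 0 at almost every t ∈ [0, ε), and i(0) ≥ b·tanh(bε). Then i(t) > 0 for every t ∈ [0, ε). -/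
open Real Set MeasureTheory

open Filter Topology Metric in
private lemma slope_seq_tendsto' {f : ℝ → ℝ} {d c : ℝ} (h : HasDerivAt f d c) :
    Tendsto (fun n : ℕ => (f (c + 1 / (n + 1)) - f c) / (1 / (n + 1))) atTop (𝓝 d) := by
  have hs := hasDerivAt_iff_tendsto_slope.mp h
  have hpos : ∀ n : ℕ, (0:ℝ) < 1 / (n + 1) := by
    intro n; positivity
  have h1 : Tendsto (fun n : ℕ => c + 1 / (n + 1 : ℝ)) atTop (𝓝[≠] c) := by
    rw [tendsto_nhdsWithin_iff]
    constructor
    · have := tendsto_one_div_add_atTop_nhds_zero_nat (𝕜 := ℝ)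
      have h2 : Tendsto (fun n : ℕ => c + 1 / (n + 1 : ℝ)) atTop (𝓝 (c + 0)) :=
        tendsto_const_nhds.add this
      simpa using h2
    · exact Eventually.of_forall fun n => by
        simp only [mem_compl_iff, mem_singleton_iff]
        nlinarith [hpos n]
  have := hs.comp h1
  have heq : (fun n : ℕ => slope f c (c + 1 / (n + 1))) =
      fun n : ℕ => (f (c + 1 / (n + 1)) - f c) / (1 / (n + 1)) := by
    funext n
    rw [slope_def_field]
    have hne : (n:ℝ) + 1 ≠ 0 := by positivity
    rw [show c + 1 / ((n:ℝ) + 1) - c = 1 / ((n:ℝ)+1) by ring]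
  rw [← heq]
  exact this

open Filter Topology Metric in
/-- A Lipschitz function with a.e. nonnegative derivative on `(a,b)` satisfies `f a ≤ f b`. -/
private lemma lemA' {f : ℝ → ℝ} {L : NNReal} (hf : LipschitzWith L f) {a b : ℝ} (hab : a ≤ b)
    (h : ∀ᵐ x ∂(volume : Measure ℝ), x ∈ Ioo a b → ∃ d, HasDerivAt f d x ∧ 0 ≤ d) :
    f a ≤ f b := by
  have hcont : Continuous f := hf.continuous
  set F : ℝ → ℝ := fun u => ∫ x in a..u, f x with hF
  have hFd : ∀ c : ℝ, HasDerivAt F (f c) c := fun c =>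
    (hcont.integral_hasStrictDerivAt a c).hasDerivAt
  set hq : ℕ → ℝ := fun n => 1 / (n + 1) with hhq
  have hqpos : ∀ n, 0 < hq n := fun n => by positivity
  set q : ℕ → ℝ → ℝ := fun n x => (f (x + hq n) - f x) / hq n with hqdef
  set μ : Measure ℝ := volume.restrict (Ioo a b) with hμ
  have hint : ∀ n, ∫ x, q n x ∂μ =
      (F (b + hq n) - F b) / hq n - (F (a + hq n) - F a) / hq n := by
    intro n
    have hi1 : ∀ c d : ℝ, IntervalIntegrable (fun x => f (x + hq n)) volume c d :=
      fun c d => ((hcont.comp (by continuity)).intervalIntegrable c d)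
    have hi2 : ∀ c d : ℝ, IntervalIntegrable f volume c d :=
      fun c d => hcont.intervalIntegrable c d
    have e1 : ∫ x, q n x ∂μ = ∫ x in a..b, q n x := by
      rw [intervalIntegral.integral_of_le hab, integral_Ioc_eq_integral_Ioo]
    have e2 : ∫ x in a..b, q n x =
        ((∫ x in a..b, f (x + hq n)) - ∫ x in a..b, f x) / hq n := by
      simp only [hqdef]
      rw [intervalIntegral.integral_div, intervalIntegral.integral_sub (hi1 a b) (hi2 a b)]
    have e3 : (∫ x in a..b, f (x + hq n)) = ∫ x in (a + hq n)..(b + hq n), f x :=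
      intervalIntegral.integral_comp_add_right f (hq n)
    have e4 : (∫ x in (a + hq n)..(b + hq n), f x) - ∫ x in a..b, f x
        = (F (b + hq n) - F b) - (F (a + hq n) - F a) := by
      have d1 : F (b + hq n) - F (a + hq n) = ∫ x in (a + hq n)..(b + hq n), f x :=
        intervalIntegral.integral_interval_sub_left (hi2 a _) (hi2 a _)
      rw [← d1]
      have : F a = 0 := by simp [hF]
      rw [this]
      simp [hF]
      ring
    rw [e1, e2, e3, e4]
    ring
  have hlim1 : Tendsto (fun n => ∫ x, q n x ∂μ) atTop (𝓝 (f b - f a)) := by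
    have hb' := slope_seq_tendsto' (hFd b)
    have ha' := slope_seq_tendsto' (hFd a)
    have := hb'.sub ha'
    refine Tendsto.congr (fun n => (hint n).symm) this
  have hlim2 : Tendsto (fun n => ∫ x, q n x ∂μ) atTop (𝓝 (∫ x, deriv f x ∂μ)) := by
    refine MeasureTheory.tendsto_integral_of_dominated_convergence (fun _ => (L : ℝ))
      (fun n => ((hcont.comp (by continuity)).sub hcont).div_const (hq n)
        |>.aestronglyMeasurable.restrict)
      ?_ ?_ ?_
    · exact integrableOn_const measure_Ioo_lt_top.ne
    · intro n
      refine Eventually.of_forall fun x => ?_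
      have hd := hf.dist_le_mul (x + hq n) x
      rw [Real.dist_eq, Real.dist_eq] at hd
      simp only [hqdef, Real.norm_eq_abs, abs_div, abs_of_pos (hqpos n)]
      rw [div_le_iff₀ (hqpos n)]
      calc |f (x + hq n) - f x| ≤ L * |x + hq n - x| := hd
        _ = L * hq n := by rw [show x + hq n - x = hq n by ring, abs_of_pos (hqpos n)]
        _ = (L : ℝ) * hq n := rfl
    · have h' : ∀ᵐ x ∂μ, x ∈ Ioo a b → ∃ d, HasDerivAt f d x ∧ 0 ≤ d :=
        ae_restrict_of_ae h
      have hmem : ∀ᵐ x ∂μ, x ∈ Ioo a b := ae_restrict_mem measurableSet_Ioo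
      filter_upwards [h', hmem] with x hx hxm
      obtain ⟨d, hd, _⟩ := hx hxm
      have : deriv f x = d := hd.deriv
      rw [this]
      exact slope_seq_tendsto' hd
  have heq : ∫ x, deriv f x ∂μ = f b - f a := tendsto_nhds_unique hlim2 hlim1
  have hnn : 0 ≤ ∫ x, deriv f x ∂μ := by
    refine integral_nonneg_of_ae ?_
    have h' : ∀ᵐ x ∂μ, x ∈ Ioo a b → ∃ d, HasDerivAt f d x ∧ 0 ≤ d := ae_restrict_of_ae h
    have hmem : ∀ᵐ x ∂μ, x ∈ Ioo a b := ae_restrict_mem measurableSet_Ioo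
    filter_upwards [h', hmem] with x hx hxm
    obtain ⟨d, hd, hd0⟩ := hx hxm
    rw [hd.deriv]; exact hd0
  linarith [heq ▸ hnn]

open Filter Topology Metric in
/-- A function that is Lipschitz on `[a,b]` with a.e. nonnegative derivative on `(a,b)`
satisfies `f a ≤ f b`. -/
private lemma lemA2 {f : ℝ → ℝ} {a b C : ℝ} (hab : a ≤ b)
    (hlip : ∀ x ∈ Icc a b, ∀ y ∈ Icc a b, |f x - f y| ≤ C * |x - y|)
    (h : ∀ᵐ x ∂(volume : Measure ℝ), x ∈ Ioo a b → ∃ d, HasDerivAt f d x ∧ 0 ≤ d) :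
    f a ≤ f b := by
  have hlip' : LipschitzOnWith C.toNNReal f (Icc a b) := by
    apply LipschitzOnWith.of_dist_le_mul
    intro x hx y hy
    rw [Real.dist_eq, Real.dist_eq]
    calc |f x - f y| ≤ C * |x - y| := hlip x hx y hy
      _ ≤ C.toNNReal * |x - y| :=
        mul_le_mul_of_nonneg_right (Real.le_coe_toNNReal C) (abs_nonneg _)
  obtain ⟨g, hg, heq⟩ := hlip'.extend_real
  have ha : f a = g a := heq ⟨le_refl a, hab⟩
  have hb : f b = g b := heq ⟨hab, le_refl b⟩
  rw [ha, hb]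
  apply lemA' hg hab
  filter_upwards [h] with x hx hxm
  obtain ⟨d, hd, hd0⟩ := hx hxm
  refine ⟨d, ?_, hd0⟩
  apply hd.congr_of_eventuallyEq
  have hnb : Icc a b ∈ 𝓝 x := Icc_mem_nhds hxm.1 hxm.2
  filter_upwards [hnb] with y hy
  exact (heq hy).symm

open Filter Topology Metric in
/-- A locally Lipschitz function on a set containing `[a,b]` is Lipschitz on `[a,b]`. -/
private lemma lemL' {s : Set ℝ} {f : ℝ → ℝ} (hf : LocallyLipschitzOn s f) {a b : ℝ}
    (hsub : Icc a b ⊆ s) :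
    ∃ C : ℝ, 0 ≤ C ∧ ∀ x ∈ Icc a b, ∀ y ∈ Icc a b, |f x - f y| ≤ C * |x - y| := by
  rcases le_or_gt a b with hab | hab
  swap
  · exact ⟨0, le_refl 0, fun x hx y hy => by simp [Icc_eq_empty_of_lt hab] at hx⟩
  have key : ∀ x : ℝ, ∃ p : ℝ × NNReal, 0 < p.1 ∧
      (x ∈ Icc a b → LipschitzOnWith p.2 f (Icc a b ∩ ball x p.1)) := by
    intro x
    by_cases hx : x ∈ Icc a b
    · obtain ⟨K, t, ht, hK⟩ := hf (hsub hx)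
      rw [mem_nhdsWithin] at ht
      obtain ⟨u, hu, hxu, hus⟩ := ht
      obtain ⟨δ, hδ, hball⟩ := Metric.isOpen_iff.mp hu x hxu
      refine ⟨⟨δ, K⟩, hδ, fun _ => hK.mono ?_⟩
      intro y ⟨hy1, hy2⟩
      exact hus ⟨hball hy2, hsub hy1⟩
    · exact ⟨⟨1, 0⟩, one_pos, fun h => absurd h hx⟩
  choose p hppos hplip using key
  obtain ⟨t, htmem, htcov⟩ := isCompact_Icc.elim_nhds_subcover
    (fun x => ball x ((p x).1 / 2)) (fun x hx => ball_mem_nhds x (by linarith [hppos x]))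
  have htne : t.Nonempty := by
    rcases Finset.eq_empty_or_nonempty t with h | h
    · exfalso
      have := htcov (left_mem_Icc.mpr hab)
      simp [h] at this
    · exact h
  set δ : ℝ := t.inf' htne (fun x => (p x).1 / 2) with hδdef
  have hδpos : 0 < δ := by
    rw [hδdef, Finset.lt_inf'_iff]
    intro x hx; linarith [hppos x]
  set C : ℝ := t.sup' htne (fun x => ((p x).2 : ℝ)) with hCdef
  have hC0 : 0 ≤ C := by
    obtain ⟨x, hx⟩ := htne
    exact le_trans ((p x).2.coe_nonneg) (Finset.le_sup' (fun x => ((p x).2 : ℝ)) hx)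
  have short : ∀ x ∈ Icc a b, ∀ y ∈ Icc a b, |x - y| < δ → |f x - f y| ≤ C * |x - y| := by
    intro x hx y hy hxy
    obtain ⟨c, hct, hcball⟩ := by
      have := htcov hy
      simpa only [mem_iUnion, exists_prop] using this
    have hyc : |y - c| < (p c).1 / 2 := by
      have := mem_ball.mp hcball; rwa [Real.dist_eq] at this
    have hxc : |x - c| < (p c).1 := by
      have hδc : δ ≤ (p c).1 / 2 := Finset.inf'_le _ hct
      calc |x - c| ≤ |x - y| + |y - c| := by
            calc |x - c| = |(x - y) + (y - c)| := by ring_nf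
              _ ≤ |x - y| + |y - c| := abs_add_le _ _
        _ < δ + (p c).1 / 2 := by linarith
        _ ≤ (p c).1 := by linarith
    have hcIcc : c ∈ Icc a b := htmem c hct
    have hlip := hplip c hcIcc
    have hd := hlip.dist_le_mul x ⟨hx, by rw [mem_ball, Real.dist_eq]; exact hxc⟩
      y ⟨hy, by rw [mem_ball, Real.dist_eq]; linarith [hppos c]⟩
    rw [Real.dist_eq, Real.dist_eq] at hd
    calc |f x - f y| ≤ ((p c).2 : ℝ) * |x - y| := hd
      _ ≤ C * |x - y| := by
          apply mul_le_mul_of_nonneg_right _ (abs_nonneg _)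
          exact Finset.le_sup' (fun x => ((p x).2 : ℝ)) hct
  refine ⟨C, hC0, ?_⟩
  have main : ∀ x ∈ Icc a b, ∀ y ∈ Icc a b, x ≤ y → |f x - f y| ≤ C * |x - y| := by
    intro x hx y hy hxy
    obtain ⟨n, hn⟩ := exists_nat_gt ((y - x) / δ)
    have hn0 : 0 < n := by
      by_contra h
      push_neg at h
      interval_cases n
      simp at hn
      nlinarith [div_nonneg (by linarith : (0:ℝ) ≤ y - x) hδpos.le]
    have hnR : (0:ℝ) < n := Nat.cast_pos.mpr hn0
    have hstep : (y - x) / n < δ := by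
      rw [div_lt_iff₀ hnR]
      have := (div_lt_iff₀ hδpos).mp hn
      linarith
    set c : ℕ → ℝ := fun k => x + (y - x) * k / n with hcdef
    have hyx : (0:ℝ) ≤ y - x := by linarith
    have hc0 : c 0 = x := by simp [hcdef]
    have hcn : c n = y := by
      simp only [hcdef]
      rw [mul_div_assoc, div_self (ne_of_gt hnR), mul_one]
      ring
    have hcm : ∀ k : ℕ, k ≤ n → c k ∈ Icc a b := by
      intro k hk
      have hk' : (k:ℝ) ≤ n := Nat.cast_le.mpr hk
      have hk0 : (0:ℝ) ≤ k := Nat.cast_nonneg k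
      have h1 : x ≤ c k := by
        simp only [hcdef]
        have : 0 ≤ (y - x) * k / n := by
          apply div_nonneg _ hnR.le
          exact mul_nonneg hyx hk0
        linarith
      have h2 : c k ≤ y := by
        simp only [hcdef]
        have hdiv : (y - x) * k / n ≤ y - x := by
          rw [div_le_iff₀ hnR]
          nlinarith
        linarith
      exact ⟨le_trans hx.1 h1, le_trans h2 hy.2⟩
    have hconsec : ∀ k : ℕ, k < n → |f (c k) - f (c (k+1))| ≤ C * ((y - x) / n) := by
      intro k hk
      have hd : |c k - c (k+1)| = (y - x) / n := by
        simp only [hcdef]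
        push_cast
        rw [show x + (y - x) * k / n - (x + (y - x) * (k + 1) / n) = -((y-x)/n) by ring]
        rw [abs_neg, abs_of_nonneg (div_nonneg hyx hnR.le)]
      have := short (c k) (hcm k hk.le) (c (k+1)) (hcm (k+1) hk)
        (by rw [hd]; exact hstep)
      rwa [hd] at this
    have := dist_le_Ico_sum_dist (fun k => f (c k)) (Nat.zero_le n)
    rw [Real.dist_eq] at this
    simp only [hc0, hcn] at this
    calc |f x - f y| ≤ ∑ k ∈ Finset.Ico 0 n, dist (f (c k)) (f (c (k+1))) := this
      _ ≤ ∑ k ∈ Finset.Ico 0 n, C * ((y - x) / n) := by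
          apply Finset.sum_le_sum
          intro k hk
          rw [Real.dist_eq]
          exact hconsec k (Finset.mem_Ico.mp hk).2
      _ = n * (C * ((y - x) / n)) := by
          rw [Finset.sum_const]
          simp [Nat.card_Ico]
      _ = C * (y - x) := by field_simp
      _ = C * |x - y| := by rw [abs_sub_comm, abs_of_nonneg (by linarith)]
  intro x hx y hy
  rcases le_total x y with h | h
  · exact main x hx y hy h
  · rw [abs_sub_comm (f x), abs_sub_comm x]
    exact main y hy x hx h

private lemma my_hasDerivAt_tanh (x : ℝ) : HasDerivAt Real.tanh (1 - Real.tanh x ^ 2) x := by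
  have hc : Real.cosh x ≠ 0 := (Real.cosh_pos x).ne'
  have h := (Real.hasDerivAt_sinh x).div (Real.hasDerivAt_cosh x) hc
  have hfun : (Real.sinh / Real.cosh) = Real.tanh := by
    funext y; rw [Pi.div_apply, Real.tanh_eq_sinh_div_cosh]
  rw [hfun] at h
  refine h.congr_deriv ?_
  have hid := Real.cosh_sq_sub_sinh_sq x
  rw [Real.tanh_eq_sinh_div_cosh]
  field_simp

private lemma my_tanh_sq_le_one (x : ℝ) : Real.tanh x ^ 2 ≤ 1 := by
  rw [Real.tanh_eq_sinh_div_cosh, div_pow, div_le_one (by positivity)]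
  nlinarith [Real.cosh_sq_sub_sinh_sq x]

private lemma my_abs_tanh_le_one (x : ℝ) : |Real.tanh x| ≤ 1 := by
  have := my_tanh_sq_le_one x
  rw [abs_le]
  constructor <;> nlinarith [sq_nonneg (Real.tanh x)]

private lemma my_tanh_pos {x : ℝ} (hx : 0 < x) : 0 < Real.tanh x := by
  rw [Real.tanh_eq_sinh_div_cosh]
  exact div_pos (Real.sinh_pos_iff.mpr hx) (Real.cosh_pos x)

private lemma exp_abs_sub_le {r s m : ℝ} (hr : r ≤ m) (hs : s ≤ m) :
    |Real.exp r - Real.exp s| ≤ Real.exp m * |r - s| := by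
  wlog h : s ≤ r generalizing r s
  · rw [abs_sub_comm, abs_sub_comm r s]
    exact this hs hr (le_of_not_ge h)
  have h1 : Real.exp s = Real.exp r * Real.exp (s - r) := by
    rw [← Real.exp_add]; ring_nf
  have h2 : s - r + 1 ≤ Real.exp (s - r) := Real.add_one_le_exp _
  have h3 : Real.exp r ≤ Real.exp m := Real.exp_le_exp.mpr hr
  have h4 : (0:ℝ) < Real.exp r := Real.exp_pos r
  rw [abs_of_nonneg (by nlinarith [Real.exp_le_exp.mpr h] : (0:ℝ) ≤ Real.exp r - Real.exp s),
    abs_of_nonneg (by linarith : (0:ℝ) ≤ r - s)]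
  nlinarith

open Filter Topology Metric in
theorem stmt_4 (ε b : ℝ) (hε : 0 < ε) (hb : 0 < b)
    (i : ℝ → ℝ) (hi : LocallyLipschitzOn (Ico 0 ε) i)
    (hineq : ∀ᵐ t ∂(volume : Measure ℝ), t ∈ Ico 0 ε →
      ∃ d : ℝ, HasDerivWithinAt i d (Ico 0 ε) t ∧ -d + (i t) ^ 2 - b ^ 2 ≤ 0)
    (h0 : b * Real.tanh (b * ε) ≤ i 0) :
    ∀ t ∈ Ico 0 ε, 0 < i t := by
  set u : ℝ → ℝ := fun t => b * Real.tanh (b * (ε - t)) with hu_def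
  have hu : ∀ t, HasDerivAt u (u t ^ 2 - b ^ 2) t := by
    intro t
    have hin : HasDerivAt (fun t : ℝ => b * (ε - t)) (b * (-1)) t :=
      ((hasDerivAt_id t).const_sub ε).const_mul b
    have hcomp := ((my_hasDerivAt_tanh (b * (ε - t))).comp t hin).const_mul b
    refine hcomp.congr_deriv ?_
    simp only [hu_def]
    ring
  have hub : ∀ t, |u t| ≤ b := by
    intro t
    simp only [hu_def, abs_mul, abs_of_pos hb]
    calc b * |Real.tanh (b * (ε - t))| ≤ b * 1 :=
      mul_le_mul_of_nonneg_left (my_abs_tanh_le_one _) hb.le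
      _ = b := mul_one b
  have hucont : Continuous u :=
    continuous_iff_continuousAt.mpr fun t => (hu t).continuousAt
  have hulip : ∀ x y : ℝ, |u x - u y| ≤ b ^ 2 * |x - y| := by
    intro x y
    have := Convex.norm_image_sub_le_of_norm_hasDerivWithin_le
      (f := u) (f' := fun t => u t ^ 2 - b ^ 2) (s := univ) (C := b ^ 2)
      (fun t _ => (hu t).hasDerivWithinAt) ?_ convex_univ (mem_univ y) (mem_univ x)
    · simpa [Real.norm_eq_abs] using this
    · intro t _
      rw [Real.norm_eq_abs, abs_le]
      have h1 : u t ^ 2 ≤ b ^ 2 := by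
        have := hub t
        nlinarith [abs_nonneg (u t), sq_abs (u t)]
      constructor
      · show -b ^ 2 ≤ u t ^ 2 - b ^ 2
        nlinarith [sq_nonneg (u t)]
      · show u t ^ 2 - b ^ 2 ≤ b ^ 2
        nlinarith [sq_nonneg (u t)]
  -- key comparison
  have key : ∀ T ∈ Ico 0 ε, u T ≤ i T := by
    rintro T ⟨hT0, hTε⟩
    rcases eq_or_lt_of_le hT0 with h0T | h0T
    · rw [← h0T]
      simpa [hu_def] using h0
    · -- 0 < T < ε
      have hsub : Icc 0 T ⊆ Ico 0 ε := fun x hx => ⟨hx.1, lt_of_le_of_lt hx.2 hTε⟩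
      obtain ⟨K, hK0, hKlip⟩ := lemL' hi hsub
      set M : ℝ := |i 0| + K * T with hMdef
      have hM0 : 0 ≤ M := by positivity
      have hMb : ∀ x ∈ Icc 0 T, |i x| ≤ M := by
        intro x hx
        have := hKlip x hx 0 (left_mem_Icc.mpr hT0)
        have hxT : |x - 0| ≤ T := by
          rw [sub_zero, abs_of_nonneg hx.1]; exact hx.2
        calc |i x| ≤ |i 0| + |i x - i 0| := by
              have := abs_sub_abs_le_abs_sub (i x) (i 0); linarith [abs_sub_abs_le_abs_sub (i x) (i 0)]
          _ ≤ |i 0| + K * |x - 0| := by linarith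
          _ ≤ |i 0| + K * T := by nlinarith
          _ = M := rfl
      have icont : ContinuousOn i (Ico 0 ε) := hi.continuousOn
      set v : ℝ → ℝ := fun s => i s + u s with hv_def
      have hvcont : ContinuousOn v (Ico 0 ε) := icont.add hucont.continuousOn
      have hvint : ∀ x ∈ Icc 0 T, IntervalIntegrable v volume 0 x := by
        intro x hx
        apply ContinuousOn.intervalIntegrable
        apply hvcont.mono
        intro z hz
        apply hsub
        rcases le_total 0 x with h | h
        · rw [uIcc_of_le h] at hz
          exact ⟨hz.1, le_trans hz.2 hx.2⟩
        · have : x = 0 := le_antisymm h hx.1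
          rw [this] at hz; simp at hz; rw [hz]; exact left_mem_Icc.mpr hT0
      set A : ℝ → ℝ := fun t => ∫ s in (0:ℝ)..t, v s with hA_def
      have hvbound : ∀ z ∈ Icc 0 T, |v z| ≤ M + b := by
        intro z hz
        calc |v z| ≤ |i z| + |u z| := abs_add_le _ _
          _ ≤ M + b := add_le_add (hMb z hz) (hub z)
      have hAlip : ∀ x ∈ Icc 0 T, ∀ y ∈ Icc 0 T, |A x - A y| ≤ (M + b) * |x - y| := by
        intro x hx y hy
        have hdiff : A x - A y = ∫ s in y..x, v s :=
          intervalIntegral.integral_interval_sub_left (hvint x hx) (hvint y hy)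
        rw [hdiff]
        have := intervalIntegral.norm_integral_le_of_norm_le_const
          (C := M + b) (f := v) (a := y) (b := x) ?_
        · rwa [Real.norm_eq_abs] at this
        · intro z hz
          have hz' : z ∈ Icc 0 T := by
            have h1 : z ∈ uIcc y x := uIoc_subset_uIcc hz
            exact uIcc_subset_Icc hy hx h1
          rw [Real.norm_eq_abs]
          exact hvbound z hz'
      have hA0 : A 0 = 0 := by simp [hA_def]
      have hAbd : ∀ x ∈ Icc 0 T, |A x| ≤ (M + b) * T := by
        intro x hx
        have := hAlip x hx 0 (left_mem_Icc.mpr hT0)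
        rw [hA0, sub_zero, sub_zero] at this
        have hxa : |x| ≤ T := by rw [abs_of_nonneg hx.1]; exact hx.2
        nlinarith [abs_nonneg x]
      have hAderiv : ∀ t ∈ Ioo 0 T, HasDerivAt A (v t) t := by
        intro t ht
        have htm : t ∈ Ioo 0 ε := ⟨ht.1, lt_trans ht.2 hTε⟩
        apply intervalIntegral.integral_hasDerivAt_right
          (hvint t ⟨ht.1.le, ht.2.le⟩)
        · exact (hvcont.mono Ioo_subset_Ico_self).stronglyMeasurableAtFilter
            isOpen_Ioo t htm
        · exact (hvcont.continuousAt (mem_nhds_iff.mpr ⟨Ioo 0 ε, Ioo_subset_Ico_self,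
            isOpen_Ioo, htm⟩))
      set m : ℝ := (M + b) * T with hm_def
      set E : ℝ → ℝ := fun t => Real.exp (-A t) with hE_def
      have hEbd : ∀ x ∈ Icc 0 T, E x ≤ Real.exp m := by
        intro x hx
        apply Real.exp_le_exp.mpr
        have := hAbd x hx
        rw [abs_le] at this
        linarith [this.1]
      have hElip : ∀ x ∈ Icc 0 T, ∀ y ∈ Icc 0 T,
          |E x - E y| ≤ Real.exp m * ((M + b) * |x - y|) := by
        intro x hx y hy
        have h1 : -A x ≤ m := by
          have := hAbd x hx; rw [abs_le] at this; linarith [this.1]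
        have h2 : -A y ≤ m := by
          have := hAbd y hy; rw [abs_le] at this; linarith [this.1]
        have := exp_abs_sub_le h1 h2
        calc |E x - E y| ≤ Real.exp m * |-A x - -A y| := this
          _ = Real.exp m * |A x - A y| := by rw [show -A x - -A y = -(A x - A y) by ring, abs_neg]
          _ ≤ Real.exp m * ((M + b) * |x - y|) := by
              apply mul_le_mul_of_nonneg_left (hAlip x hx y hy) (Real.exp_pos m).le
      set g : ℝ → ℝ := fun t => (i t - u t) * E t with hg_def
      set C : ℝ := (M + b) * (Real.exp m * (M + b)) + Real.exp m * (K + b ^ 2) with hC_def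
      have hglip : ∀ x ∈ Icc 0 T, ∀ y ∈ Icc 0 T, |g x - g y| ≤ C * |x - y| := by
        intro x hx y hy
        have hid : g x - g y = (i x - u x) * (E x - E y) + E y * ((i x - u x) - (i y - u y)) := by
          simp only [hg_def]; ring
        have b1 : |i x - u x| ≤ M + b := by
          calc |i x - u x| ≤ |i x| + |u x| := abs_sub _ _
            _ ≤ M + b := add_le_add (hMb x hx) (hub x)
        have b2 : |E y| ≤ Real.exp m := by
          rw [abs_of_pos (Real.exp_pos _)]
          exact hEbd y hy
        have b3 : |(i x - u x) - (i y - u y)| ≤ (K + b ^ 2) * |x - y| := by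
          calc |(i x - u x) - (i y - u y)| = |(i x - i y) - (u x - u y)| := by ring_nf
            _ ≤ |i x - i y| + |u x - u y| := abs_sub _ _
            _ ≤ K * |x - y| + b ^ 2 * |x - y| := add_le_add (hKlip x hx y hy) (hulip x y)
            _ = (K + b ^ 2) * |x - y| := by ring
        calc |g x - g y| ≤ |(i x - u x) * (E x - E y)| + |E y * ((i x - u x) - (i y - u y))| := by
              rw [hid]; exact abs_add_le _ _
          _ = |i x - u x| * |E x - E y| + |E y| * |(i x - u x) - (i y - u y)| := by
              rw [abs_mul, abs_mul]
          _ ≤ (M + b) * (Real.exp m * ((M + b) * |x - y|))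
              + Real.exp m * ((K + b ^ 2) * |x - y|) := by
              apply add_le_add
              · exact mul_le_mul b1 (hElip x hx y hy) (abs_nonneg _) (by linarith)
              · exact mul_le_mul b2 b3 (abs_nonneg _) (Real.exp_pos m).le
          _ = C * |x - y| := by rw [hC_def]; ring
      have hae : ∀ᵐ x ∂(volume : Measure ℝ), x ∈ Ioo 0 T →
          ∃ d, HasDerivAt g d x ∧ 0 ≤ d := by
        filter_upwards [hineq] with t hder ht
        have htm : t ∈ Ico 0 ε := ⟨ht.1.le, lt_trans ht.2 hTε⟩
        obtain ⟨d, hdi, hquad⟩ := hder htm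
        have hnbd : Ico 0 ε ∈ 𝓝 t := Ico_mem_nhds ht.1 (lt_trans ht.2 hTε)
        have hdi' : HasDerivAt i d t := hdi.hasDerivAt hnbd
        have hut := hu t
        have hAt := hAderiv t ht
        have hE' : HasDerivAt E (Real.exp (-A t) * (-v t)) t :=
          by have := (Real.hasDerivAt_exp (-A t)).comp t hAt.neg; exact this
        have hg' : HasDerivAt g ((d - (u t ^ 2 - b ^ 2)) * E t
            + (i t - u t) * (Real.exp (-A t) * (-v t))) t :=
          (hdi'.sub hut).mul hE'
        refine ⟨_, hg', ?_⟩
        have hval : (d - (u t ^ 2 - b ^ 2)) * E t + (i t - u t) * (Real.exp (-A t) * (-v t))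
            = E t * (d + b ^ 2 - i t ^ 2) := by
          simp only [hE_def, hv_def]
          ring
        rw [hval]
        apply mul_nonneg (Real.exp_pos _).le
        linarith
      have hcomp := lemA2 h0T.le hglip hae
      have hg0 : g 0 = i 0 - u 0 := by
        simp [hg_def, hE_def, hA0]
      have hg0' : 0 ≤ g 0 := by
        rw [hg0]
        have : u 0 = b * Real.tanh (b * ε) := by simp [hu_def]
        rw [this]
        linarith
      have hgT : 0 ≤ (i T - u T) * E T := le_trans hg0' hcomp
      nlinarith [Real.exp_pos (-A T), hgT]
  -- conclude positivity
  rintro t ⟨ht0, htε⟩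
  have h1 : 0 < u t := by
    simp only [hu_def]
    apply mul_pos hb
    apply my_tanh_pos
    apply mul_pos hb
    linarith
  exact lt_of_lt_of_le h1 (key t ⟨ht0, htε⟩)
end

section
/- Let ε > 0, a > 0, and let i : [0, ε) → ℝ be a locally Lipschitz function such that i(t) ≥ 0 for all t ∈ [0, ε) and −i'(t) + i(t)² − a² ≥ 0 at almost every t ∈ [0, ε). Then i(0) ≥ a·tanh(aε). -/
open Real Set MeasureTheory

lemma antitone_aux (f : ℝ → ℝ) (L : NNReal) (c d : ℝ) (hcd : c ≤ d)
    (hf : LipschitzOnWith L f (Icc c d))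
    (hder : ∀ᵐ x ∂(volume : Measure ℝ), x ∈ Ioo c d → ∃ d', HasDerivAt f d' x ∧ d' ≤ 0) :
    f d ≤ f c := by
  set p : ℝ → ℝ := fun x => max c (min x d) with hp
  have hpmem : ∀ x, p x ∈ Icc c d := fun x => ⟨le_max_left _ _, max_le hcd (min_le_right _ _)⟩
  have hpmono : Monotone p := fun x y hxy => max_le_max le_rfl (min_le_min hxy le_rfl)
  have hpc : p c = c := by simp [hp, min_eq_left hcd]
  have hpd : p d = d := by simp [hp, max_eq_right hcd]
  have hpcont : Continuous p := continuous_const.max (continuous_id.min continuous_const)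
  have hplip : ∀ x y, x ≤ y → p y - p x ≤ y - x := by
    intro x y hxy
    have h1 : |p y - p x| ≤ |min y d - min x d| := by
      rw [hp]; simp only [max_comm c]
      exact abs_max_sub_max_le_abs _ _ _
    have h2 : |min y d - min x d| ≤ max |y - x| |d - d| := abs_min_sub_min_le_max _ _ _ _
    have h3 : |y - x| = y - x := abs_of_nonneg (by linarith)
    rw [sub_self, abs_zero, max_eq_left (abs_nonneg _)] at h2
    calc p y - p x ≤ |p y - p x| := le_abs_self _
      _ ≤ |min y d - min x d| := h1
      _ ≤ |y - x| := h2
      _ = y - x := h3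
  -- the monotone function m = f ∘ p + L * p
  set m : ℝ → ℝ := fun x => f (p x) + L * p x with hm
  have key : ∀ x y, x ≤ y → f (p x) - f (p y) ≤ L * (p y - p x) := by
    intro x y hxy
    have := hf.dist_le_mul _ (hpmem x) _ (hpmem y)
    rw [Real.dist_eq, Real.dist_eq] at this
    have h2 : |p x - p y| = p y - p x := by
      rw [abs_sub_comm, abs_of_nonneg (by linarith [hpmono hxy])]
    calc f (p x) - f (p y) ≤ |f (p x) - f (p y)| := le_abs_self _
      _ ≤ L * |p x - p y| := this
      _ = L * (p y - p x) := by rw [h2]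
  have hmmono : Monotone m := by
    intro x y hxy
    have := key x y hxy
    simp only [hm]; nlinarith [hpmono hxy]
  have hmcont : Continuous m := by
    have : Continuous (f ∘ p) := hf.continuousOn.comp_continuous hpcont hpmem
    exact this.add (continuous_const.mul hpcont)
  have hm2lip : ∀ x y, x ≤ y → m y - m x ≤ 2 * L * (y - x) := by
    intro x y hxy
    have h1 := key y x  -- wrong direction; redo
    have h2 := hf.dist_le_mul _ (hpmem y) _ (hpmem x)
    rw [Real.dist_eq, Real.dist_eq] at h2
    have h3 : |p y - p x| = p y - p x := abs_of_nonneg (by linarith [hpmono hxy])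
    have h4 : f (p y) - f (p x) ≤ L * (p y - p x) := by
      calc f (p y) - f (p x) ≤ |f (p y) - f (p x)| := le_abs_self _
        _ ≤ L * |p y - p x| := h2
        _ = L * (p y - p x) := by rw [h3]
    have h5 := hplip x y hxy
    have h6 : (0:ℝ) ≤ L := L.coe_nonneg
    simp only [hm]; nlinarith [hpmono hxy]
  -- Stieltjes functions
  set S : StieltjesFunction ℝ := ⟨m, hmmono, fun x => hmcont.continuousAt.continuousWithinAt⟩ with hS
  set k : ℝ → ℝ := fun x => 2 * L * x - m x with hk
  have hkmono : Monotone k := by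
    intro x y hxy
    have := hm2lip x y hxy
    simp only [hk]; nlinarith
  have hkcont : Continuous k := (continuous_const.mul continuous_id).sub hmcont
  set K : StieltjesFunction ℝ := ⟨k, hkmono, fun x => hkcont.continuousAt.continuousWithinAt⟩ with hK
  have hsum : S.measure + K.measure = (ENNReal.ofReal (2 * L)) • (volume : Measure ℝ) := by
    refine MeasureTheory.Measure.ext_of_Ioc' _ _ (fun a b hab => ?_) (fun a b hab => ?_)
    · rw [Measure.add_apply, StieltjesFunction.measure_Ioc, StieltjesFunction.measure_Ioc]
      exact (ENNReal.add_lt_top.2 ⟨ENNReal.ofReal_lt_top, ENNReal.ofReal_lt_top⟩).ne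
    rw [Measure.add_apply, StieltjesFunction.measure_Ioc, StieltjesFunction.measure_Ioc]
    rw [Measure.smul_apply, Real.volume_Ioc, smul_eq_mul,
      ← ENNReal.ofReal_mul (by positivity)]
    rw [← ENNReal.ofReal_add (by exact sub_nonneg.2 (hmmono hab.le))
      (by exact sub_nonneg.2 (hkmono hab.le))]
    congr 1
    show m b - m a + (2 * L * b - m b - (2 * L * a - m a)) = 2 * L * (b - a)
    ring
  have hle : S.measure ≤ (ENNReal.ofReal (2 * L)) • (volume : Measure ℝ) := by
    rw [← hsum]; exact Measure.le_add_right le_rfl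
  have hac : S.measure ≪ (volume : Measure ℝ) :=
    Measure.absolutelyContinuous_of_le_smul hle
  have hwd : (volume : Measure ℝ).withDensity (S.measure.rnDeriv volume) = S.measure :=
    Measure.withDensity_rnDeriv_eq _ _ hac
  -- a.e. bound on the rnDeriv
  have hae : ∀ᵐ x ∂(volume : Measure ℝ), x ∈ Ioo c d →
      S.measure.rnDeriv volume x ≤ ENNReal.ofReal L := by
    filter_upwards [hder, S.ae_hasDerivAt, Measure.rnDeriv_lt_top S.measure volume]
      with x hx hS' hlt hmem
    obtain ⟨d', hd', hd'le⟩ := hx hmem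
    have hloc : (fun y => f y + L * y) =ᶠ[nhds x] S := by
      have : Ioo c d ∈ nhds x := Ioo_mem_nhds hmem.1 hmem.2
      filter_upwards [this] with y hy
      have hpy : p y = y := by
        rw [hp]; simp [min_eq_left hy.2.le, max_eq_right hy.1.le]
      show f y + L * y = m y
      rw [hm]; simp [hpy]
    have hd2 : HasDerivAt S (d' + L) x := by
      have h0 : HasDerivAt (fun y => (L : ℝ) * y) ((L : ℝ) * 1) x :=
        (hasDerivAt_id x).const_mul (L : ℝ)
      rw [mul_one] at h0
      have : HasDerivAt (fun y => f y + L * y) (d' + L) x := hd'.add h0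
      exact this.congr_of_eventuallyEq hloc.symm
    have huniq : (S.measure.rnDeriv volume x).toReal = d' + L := hS'.unique hd2
    have : (S.measure.rnDeriv volume x).toReal ≤ (L : ℝ) := by rw [huniq]; linarith
    exact (ENNReal.le_ofReal_iff_toReal_le hlt.ne L.coe_nonneg).2 this
  -- integrate
  have hcalc : ENNReal.ofReal (m d - m c) ≤ ENNReal.ofReal ((L : ℝ) * (d - c)) := by
    have h1 : ENNReal.ofReal (m d - m c) = S.measure (Ioc c d) := by
      rw [StieltjesFunction.measure_Ioc]
    rw [h1, ← hwd, withDensity_apply _ measurableSet_Ioc]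
    have h2 : ∫⁻ x in Ioc c d, S.measure.rnDeriv volume x ≤
        ∫⁻ _ in Ioc c d, ENNReal.ofReal L := by
      refine lintegral_mono_ae ?_
      have hIoo : ∀ᵐ x ∂(volume.restrict (Ioc c d)), x ∈ Ioo c d := by
        have : ∀ᵐ x ∂(volume.restrict (Ioc c d)), x ∈ Ioc c d :=
          ae_restrict_mem measurableSet_Ioc
        have hd0 : ∀ᵐ x ∂(volume.restrict (Ioc c d)), x ≠ d := by
          refine ae_restrict_of_ae ?_
          simp only [ae_iff, not_not]
          exact measure_mono_null (fun y hy => by simpa using hy) (volume_singleton)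
        filter_upwards [this, hd0] with x hx hxd
        exact ⟨hx.1, lt_of_le_of_ne hx.2 hxd⟩
      filter_upwards [ae_restrict_of_ae hae, hIoo] with x h1 h2 using h1 h2
    refine h2.trans ?_
    rw [setLIntegral_const, Real.volume_Ioc, ← ENNReal.ofReal_mul L.coe_nonneg]
  have hfin : m d - m c ≤ (L : ℝ) * (d - c) := by
    exact (ENNReal.ofReal_le_ofReal_iff (by
      have := sub_nonneg.2 hcd; positivity)).1 hcalc
  have : f (p d) + L * p d - (f (p c) + L * p c) ≤ L * (d - c) := hfin
  rw [hpc, hpd] at this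
  linarith

theorem stmt_5 (ε a : ℝ) (hε : 0 < ε) (ha : 0 < a)
    (i : ℝ → ℝ) (hi : LocallyLipschitzOn (Ico 0 ε) i)
    (hnonneg : ∀ t ∈ Ico 0 ε, 0 ≤ i t)
    (hineq : ∀ᵐ t ∂(volume : Measure ℝ), t ∈ Ico 0 ε →
      ∃ d : ℝ, HasDerivWithinAt i d (Ico 0 ε) t ∧ 0 ≤ -d + (i t) ^ 2 - a ^ 2) :
    a * Real.tanh (a * ε) ≤ i 0 := by
  set E : ℝ → ℝ := fun t => Real.exp (-(2 * a * t)) with hE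
  set w : ℝ → ℝ := fun t => (i t - a) / (i t + a) with hw
  set h : ℝ → ℝ := fun t => w t * E t with hh
  have hipos : ∀ t ∈ Ico 0 ε, 0 < i t + a := fun t ht => by linarith [hnonneg t ht]
  have hwlb : ∀ t ∈ Ico 0 ε, -1 ≤ w t := by
    intro t ht
    rw [hw, le_div_iff₀ (hipos t ht)]
    linarith [hnonneg t ht]
  have hwub : ∀ t ∈ Ico 0 ε, w t ≤ 1 := by
    intro t ht
    rw [hw, div_le_iff₀ (hipos t ht)]
    linarith
  have hEpos : ∀ t, 0 < E t := fun t => Real.exp_pos _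
  have hEle1 : ∀ t, 0 ≤ t → E t ≤ 1 := by
    intro t ht
    rw [hE]
    exact Real.exp_le_one_iff.2 (by nlinarith)
  have hEanti : ∀ x y, x ≤ y → E y ≤ E x := by
    intro x y hxy
    exact Real.exp_le_exp.2 (by nlinarith)
  have hElip : ∀ x y, 0 ≤ x → x ≤ y → E x - E y ≤ 2 * a * (y - x) := by
    intro x y hx hxy
    have h1 : (-(2*a*y) - -(2*a*x)) + 1 ≤ Real.exp (-(2*a*y) - -(2*a*x)) :=
      Real.add_one_le_exp _
    have h2 : Real.exp (-(2*a*y) - -(2*a*x)) = E y / E x := by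
      rw [hE]; exact Real.exp_sub _ _
    have h3 := hEpos x
    have h4 := hEle1 x hx
    rw [h2, le_div_iff₀ h3] at h1
    nlinarith [mul_nonneg (mul_nonneg (by positivity : (0:ℝ) ≤ 2*a) (by linarith : (0:ℝ) ≤ y - x)) h3.le]
  -- a.e. derivative of h is nonpositive on Ioo 0 ε
  have hderiv_h : ∀ᵐ x ∂(volume : Measure ℝ), x ∈ Ioo 0 ε → ∃ D, HasDerivAt h D x ∧ D ≤ 0 := by
    filter_upwards [hineq] with x hx hmem
    have hxIco : x ∈ Ico 0 ε := ⟨hmem.1.le, hmem.2⟩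
    obtain ⟨d, hd, hdle⟩ := hx hxIco
    have hnhds : Ico 0 ε ∈ nhds x :=
      mem_nhds_iff.2 ⟨Ioo 0 ε, Ioo_subset_Ico_self, isOpen_Ioo, hmem⟩
    have hdi : HasDerivAt i d x := hd.hasDerivAt hnhds
    have hpos := hipos x hxIco
    have hwd : HasDerivAt w ((d * (i x + a) - (i x - a) * d) / (i x + a)^2) x := by
      have h1 : HasDerivAt (fun t => i t - a) d x := hdi.sub_const a
      have h2 : HasDerivAt (fun t => i t + a) d x := hdi.add_const a
      exact h1.div h2 (ne_of_gt hpos)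
    have hEd : HasDerivAt E (-(2*a) * E x) x := by
      have h1 : HasDerivAt (fun t : ℝ => -(2*a*t)) (-(2*a)) x := by
        have h0 := ((hasDerivAt_id x).const_mul (2*a)).neg; simp only [mul_one] at h0; exact h0
      have h2 := h1.exp
      rw [hE]
      convert h2 using 1
      rw [mul_comm]
    refine ⟨_, hwd.mul hEd, ?_⟩
    have heq : (d * (i x + a) - (i x - a) * d) / (i x + a)^2 * E x
        + w x * (-(2*a) * E x)
        = (2 * a * E x / (i x + a)^2) * (d - (i x ^ 2 - a ^ 2)) := by
      rw [hw]
      field_simp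
      ring
    rw [heq]
    apply mul_nonpos_of_nonneg_of_nonpos
    · exact div_nonneg (by nlinarith [hEpos x]) (by positivity)
    · linarith
  -- local decrease
  have hlocal : ∀ t ∈ Ico 0 ε, ∃ r > 0, t + r < ε ∧ ∀ z ∈ Icc t (t + r), h z ≤ h t := by
    intro t ht
    obtain ⟨K, s, hsmem, hKlip⟩ := hi ht
    rw [mem_nhdsWithin] at hsmem
    obtain ⟨u, huopen, htu, hus⟩ := hsmem
    obtain ⟨r0, hr0, hball⟩ := Metric.isOpen_iff.1 huopen t htu
    set r : ℝ := min (r0/2) ((ε - t)/2) with hr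
    have hrpos : 0 < r := lt_min (by linarith) (by linarith [ht.2])
    have htr : t + r < ε := by
      have : r ≤ (ε - t)/2 := min_le_right _ _
      linarith [ht.2]
    have hsub : Icc t (t + r) ⊆ s ∩ Ico 0 ε := by
      intro z hz
      have hzIco : z ∈ Ico 0 ε := ⟨ht.1.trans hz.1, by linarith [hz.2]⟩
      refine ⟨hus ⟨hball ?_, hzIco⟩, hzIco⟩
      rw [Metric.mem_ball, Real.dist_eq, abs_of_nonneg (by linarith [hz.1])]
      have : r ≤ r0/2 := min_le_left _ _
      linarith [hz.2]
    -- h is Lipschitz on Icc t (t+r)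
    set C : ℝ := 2 * K / a + 2 * a with hC
    have hCnn : 0 ≤ C := by positivity
    have hlip : LipschitzOnWith (Real.toNNReal C) h (Icc t (t + r)) := by
      apply LipschitzOnWith.of_dist_le_mul
      have main : ∀ x ∈ Icc t (t + r), ∀ y ∈ Icc t (t + r), x ≤ y →
          dist (h x) (h y) ≤ C * dist x y := by
        intro x hxm y hym hxy
        have hxI := hsub hxm
        have hyI := hsub hym
        have hPx := hipos x hxI.2
        have hPy := hipos y hyI.2
        have hax : a ≤ i x + a := by linarith [hnonneg x hxI.2]
        have hay : a ≤ i y + a := by linarith [hnonneg y hyI.2]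
        have hd1 : dist x y = y - x := by
          rw [Real.dist_eq, abs_of_nonpos (by linarith : x - y ≤ 0), neg_sub]
        have hiK : |i x - i y| ≤ K * (y - x) := by
          have h1 := hKlip.dist_le_mul x hxI.1 y hyI.1
          rw [hd1, Real.dist_eq] at h1
          exact h1
        have hwdiff : |w x - w y| ≤ 2 * K / a * (y - x) := by
          have heq : w x - w y = 2 * a * (i x - i y) / ((i x + a) * (i y + a)) := by
            rw [hw]; field_simp; ring
          rw [heq, abs_div, abs_of_pos (mul_pos hPx hPy)]
          rw [div_le_iff₀ (mul_pos hPx hPy)]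
          have h1 : |2 * a * (i x - i y)| = 2 * a * |i x - i y| := by
            rw [abs_mul, abs_of_pos (by positivity)]
          rw [h1]
          have h2 : 2 * a * |i x - i y| ≤ 2 * a * (K * (y - x)) :=
            mul_le_mul_of_nonneg_left hiK (by positivity)
          have h3 : a * a ≤ (i x + a) * (i y + a) := by nlinarith
          have hK0 : (0:ℝ) ≤ K := K.coe_nonneg
          have hnn : 0 ≤ 2 * K / a * (y - x) := by
            apply mul_nonneg (by positivity) (by linarith)
          calc 2 * a * |i x - i y| ≤ 2 * a * (K * (y - x)) := h2
            _ = (2 * K / a * (y - x)) * (a * a) := by field_simp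
            _ ≤ 2 * K / a * (y - x) * ((i x + a) * (i y + a)) := by nlinarith
        have hEdiff : |E x - E y| ≤ 2 * a * (y - x) := by
          rw [abs_of_nonneg (by linarith [hEanti x y hxy])]
          exact hElip x y hxI.2.1 hxy
        have hsplit : h x - h y = (w x - w y) * E x + w y * (E x - E y) := by
          rw [hh]; ring
        rw [hd1, Real.dist_eq, hsplit]
        have hwyb : |w y| ≤ 1 := abs_le.2 ⟨hwlb y hyI.2, hwub y hyI.2⟩
        have hEb : |E x| ≤ 1 := by
          rw [abs_of_pos (hEpos x)]; exact hEle1 x hxI.2.1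
        calc |(w x - w y) * E x + w y * (E x - E y)|
            ≤ |(w x - w y) * E x| + |w y * (E x - E y)| := abs_add_le _ _
          _ = |w x - w y| * |E x| + |w y| * |E x - E y| := by rw [abs_mul, abs_mul]
          _ ≤ (2 * K / a * (y - x)) * 1 + 1 * (2 * a * (y - x)) := by
              apply add_le_add
              · apply mul_le_mul hwdiff hEb (abs_nonneg _)
                apply mul_nonneg (by positivity) (by linarith)
              · exact mul_le_mul hwyb hEdiff (abs_nonneg _) zero_le_one
          _ = C * (y - x) := by rw [hC]; ring
      intro x hxm y hym
      rw [Real.coe_toNNReal _ hCnn]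
      rcases le_total x y with hxy | hxy
      · exact main x hxm y hym hxy
      · rw [dist_comm (h x), dist_comm x]
        exact main y hym x hxm hxy
    refine ⟨r, hrpos, htr, fun z hz => ?_⟩
    apply antitone_aux h (Real.toNNReal C) t z hz.1
      (hlip.mono (Icc_subset_Icc le_rfl hz.2))
    filter_upwards [hderiv_h] with x hx hmem
    exact hx ⟨lt_of_le_of_lt ht.1 hmem.1, lt_of_lt_of_le hmem.2 (by linarith [hz.2])⟩
  -- continuity of h on Ico 0 ε
  have hconth : ContinuousOn h (Ico 0 ε) := by
    have h1 : ContinuousOn w (Ico 0 ε) := by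
      apply ContinuousOn.div
      · exact hi.continuousOn.sub continuousOn_const
      · exact hi.continuousOn.add continuousOn_const
      · exact fun t ht => ne_of_gt (hipos t ht)
    exact h1.mul (Continuous.continuousOn (by fun_prop))
  -- global decrease
  have hglobal : ∀ y ∈ Ico 0 ε, h y ≤ h 0 := by
    intro y hy
    set s : Set ℝ := {z | h z ≤ h 0} with hs
    have hclosed : IsClosed (s ∩ Icc 0 y) := by
      rw [inter_comm]
      have hseq : s = h ⁻¹' (Iic (h 0)) := rfl
      rw [hseq]
      exact (hconth.mono (fun z hz => ⟨hz.1, lt_of_le_of_lt hz.2 hy.2⟩)).preimage_isClosed_of_isClosed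
        isClosed_Icc isClosed_Iic
    have hmain : Icc 0 y ⊆ s := by
      refine hclosed.Icc_subset_of_forall_exists_gt (by show h 0 ≤ h 0; exact le_rfl : (0:ℝ) ∈ s) ?_
      intro x hx v hv
      have hxIco : x ∈ Ico 0 ε := ⟨hx.2.1, lt_trans hx.2.2 hy.2⟩
      obtain ⟨r, hrpos, hrlt, hdec⟩ := hlocal x hxIco
      refine ⟨min v (x + r), ?_, lt_min hv (by linarith), min_le_left _ _⟩
      have hzm : min v (x + r) ∈ Icc x (x + r) :=
        ⟨le_min (le_of_lt hv) (by linarith), min_le_right _ _⟩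
      exact le_trans (hdec _ hzm) hx.1
    exact hmain ⟨hy.1, le_refl y⟩
  -- take limit t → ε
  have hlim : -Real.exp (-(2 * a * ε)) ≤ w 0 := by
    have h0 : h 0 = w 0 := by
      rw [hh, hE]; simp
    have hbound : ∀ t ∈ Ico 0 ε, -E t ≤ w 0 := by
      intro t ht
      have h1 := hglobal t ht
      rw [h0] at h1
      have h2 : -E t ≤ h t := by
        show -E t ≤ w t * E t
        nlinarith [hwlb t ht, hEpos t]
      linarith
    have htend : Filter.Tendsto (fun t => -E t) (nhdsWithin ε (Iio ε))
        (nhds (-E ε)) := by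
      apply Filter.Tendsto.mono_left _ nhdsWithin_le_nhds
      exact ((Real.continuous_exp.comp (by fun_prop)).neg).tendsto ε
    refine le_of_tendsto htend ?_
    filter_upwards [Ioo_mem_nhdsLT_of_mem (⟨hε, le_refl ε⟩ : ε ∈ Ioc 0 ε)] with t htt
    exact hbound t ⟨htt.1.le, htt.2⟩
  -- conclude
  have hpos0 : 0 < i 0 + a := hipos 0 ⟨le_refl 0, hε⟩
  have hq : -(Real.exp (-(a*ε)) * Real.exp (-(a*ε))) * (i 0 + a) ≤ i 0 - a := by
    have h1 := hlim
    rw [hw, le_div_iff₀ hpos0] at h1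
    have h2 : Real.exp (-(2 * a * ε)) = Real.exp (-(a*ε)) * Real.exp (-(a*ε)) := by
      rw [← Real.exp_add]; congr 1; ring
    rw [h2] at h1
    linarith
  rw [Real.tanh_eq_sinh_div_cosh, Real.sinh_eq, Real.cosh_eq]
  have hE1 : (0:ℝ) < Real.exp (a*ε) := Real.exp_pos _
  have hE2 : (0:ℝ) < Real.exp (-(a*ε)) := Real.exp_pos _
  have hprod : Real.exp (a*ε) * Real.exp (-(a*ε)) = 1 := by
    rw [← Real.exp_add]; simp
  have h7 : a * ((Real.exp (a*ε) - Real.exp (-(a*ε)))/2 / ((Real.exp (a*ε) + Real.exp (-(a*ε)))/2))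
      = a * (Real.exp (a*ε) - Real.exp (-(a*ε))) / (Real.exp (a*ε) + Real.exp (-(a*ε))) := by
    have hne : Real.exp (a*ε) + Real.exp (-(a*ε)) ≠ 0 := by positivity
    field_simp
  rw [h7, div_le_iff₀ (by positivity)]
  have h8 := mul_le_mul_of_nonneg_right hq hE1.le
  have h9 : Real.exp (-(a*ε)) * Real.exp (-(a*ε)) * Real.exp (a*ε) = Real.exp (-(a*ε)) := by
    rw [show Real.exp (-(a*ε)) * Real.exp (-(a*ε)) * Real.exp (a*ε)
      = Real.exp (a*ε) * Real.exp (-(a*ε)) * Real.exp (-(a*ε)) by ring, hprod, one_mul]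
  have h10 : -(Real.exp (-(a*ε))) * (i 0 + a) ≤ (i 0 - a) * Real.exp (a*ε) := by
    have heq2 : -(Real.exp (-(a*ε)) * Real.exp (-(a*ε))) * (i 0 + a) * Real.exp (a*ε)
        = -(Real.exp (-(a*ε)) * Real.exp (-(a*ε)) * Real.exp (a*ε)) * (i 0 + a) := by ring
    rw [heq2, h9] at h8
    exact h8
  nlinarith [h10, mul_nonneg ha.le hE2.le]
end

section
/- Let E be a finite-dimensional real inner product space, A : I → Sym(E) a C¹ path of symmetric endomorphisms, t ∈ I an interior point at which the largest-eigenvalue function λ₊ is differentiable, and let v be a unit eigenvector of A(t) with eigenvalue λ₊(t). Then ⟨A'(t) v, v⟩ ≥ λ₊'(t). -/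
open Real Set
open scoped RealInnerProductSpace

theorem stmt_8 {E : Type*} [NormedAddCommGroup E] [InnerProductSpace ℝ E]
    [FiniteDimensional ℝ E] [Nontrivial E]
    (I : Set ℝ) (t : ℝ) (htI : I ∈ nhds t)
    (A : ℝ → E →L[ℝ] E) (hA : ContDiffOn ℝ 1 A I)
    (hsym : ∀ u ∈ I, ((A u : E →ₗ[ℝ] E)).IsSymmetric)
    (lam : ℝ → ℝ)
    (hlam : ∀ u, lam u = sSup {r : ℝ | ∃ v : E, ‖v‖ = 1 ∧ ⟪A u v, v⟫ = r})
    (A' : E →L[ℝ] E) (hA' : HasDerivAt A A' t)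
    (d : ℝ) (hd : HasDerivAt lam d t)
    (v : E) (hv : ‖v‖ = 1) (hev : A t v = lam t • v) :
    d ≤ ⟪A' v, v⟫ := by
  set f : ℝ → ℝ := fun u => ⟪A u v, v⟫ with hf
  -- f has derivative ⟪A' v, v⟫ at t
  have hAv : HasDerivAt (fun u => A u v) (A' v) t := by
    have := hA'.clm_apply (hasDerivAt_const t v)
    simpa using this
  have hfd : HasDerivAt f ⟪A' v, v⟫ t := by
    have := hAv.inner ℝ (hasDerivAt_const t v)
    simpa using this
  -- f u ≤ lam u for all u
  have hle : ∀ u, f u ≤ lam u := by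
    intro u
    rw [hlam u]
    apply le_csSup
    · refine ⟨‖A u‖, ?_⟩
      rintro r ⟨w, hw, rfl⟩
      calc ⟪A u w, w⟫ ≤ ‖A u w‖ * ‖w‖ := real_inner_le_norm _ _
        _ ≤ ‖A u‖ * ‖w‖ * ‖w‖ := by
            gcongr; exact (A u).le_opNorm w
        _ = ‖A u‖ := by rw [hw]; ring
    · exact ⟨v, hv, rfl⟩
  -- f t = lam t
  have hft : f t = lam t := by
    simp only [hf, hev, real_inner_smul_left, real_inner_self_eq_norm_sq, hv]
    ring
  -- g = lam - f has local min at t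
  have hmin : IsLocalMin (fun u => lam u - f u) t := by
    apply IsMinOn.isLocalMin (s := univ)
    · intro u _
      have h1 := hle u
      show lam t - f t ≤ lam u - f u
      rw [hft]
      linarith
    · exact Filter.univ_mem
  have h0 : d - ⟪A' v, v⟫ = 0 := hmin.hasDerivAt_eq_zero (hd.sub hfd)
  linarith
end

section
/- Let ε > 0 and let s : [0, ε'] → ℝ be continuous on [0, ε'] and locally Lipschitz on [0, ε') with −s'(t) + s(t)² − b² ≤ 0 almost everywhere, for some b > 0 and ε' > 0. If s(0) ≥ b·coth(bε'), then s(t) ≥ b·coth(b(ε'−t)) for all t ∈ [0, ε'); in particular s cannot be continuous at ε', a contradiction that shows no such s exists with s(0) > b·coth(bε') for the given ε = ε'. -/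
open Real Set MeasureTheory

open NNReal ENNReal

/-- Core a.e. comparison: a Lipschitz function with a.e. nonnegative derivative is
monotone (endpoint version). -/
lemma ae_deriv_nonneg_le {F : ℝ → ℝ} {a b : ℝ} {K : ℝ≥0} (hab : a ≤ b)
    (hlip : LipschitzOnWith K F (Icc a b))
    (hd : ∀ᵐ t ∂(volume : Measure ℝ), t ∈ Ioo a b → ∃ d, HasDerivAt F d t ∧ 0 ≤ d) :
    F a ≤ F b := by
  rcases eq_or_lt_of_le hab with rfl | hab'
  · exact le_rfl
  set p : ℝ → ℝ := fun t => max a (min t b) with hp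
  have hp_mem : ∀ t, p t ∈ Icc a b := fun t => ⟨le_max_left _ _, max_le hab (min_le_right _ _)⟩
  have hp_mono : Monotone p := fun x y h => max_le_max le_rfl (min_le_min h le_rfl)
  have hpa : p a = a := by simp [hp, min_eq_left hab]
  have hpb : p b = b := by simp [hp, max_eq_right hab]
  set G : ℝ → ℝ := fun t => F (p t) + K * p t with hG
  have hGmono : Monotone G := by
    intro x y hxy
    have h1 : p x ≤ p y := hp_mono hxy
    have h2 : dist (F (p x)) (F (p y)) ≤ K * dist (p x) (p y) :=
      lipschitzOnWith_iff_dist_le_mul.1 hlip _ (hp_mem x) _ (hp_mem y)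
    rw [Real.dist_eq, Real.dist_eq, abs_of_nonpos (sub_nonpos.2 h1)] at h2
    have h3 := abs_le.1 h2
    simp only [hG]
    nlinarith [h3.1, h3.2]
  have hFc : ContinuousOn F (Icc a b) := hlip.continuousOn
  have hpc : Continuous p := continuous_const.max (continuous_id.min continuous_const)
  have hGc : Continuous G :=
    (hFc.comp_continuous hpc hp_mem).add (continuous_const.mul hpc)
  set S : StieltjesFunction ℝ := ⟨G, hGmono, fun x => hGc.continuousWithinAt⟩ with hS
  set μ := S.measure with hμ
  have key : ∀ᵐ t, HasDerivAt S (Measure.rnDeriv μ volume t).toReal t := S.ae_hasDerivAt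
  have hbne : ∀ᵐ t : ℝ ∂volume, t ≠ b := by
    rw [ae_iff]
    have : {t : ℝ | ¬ t ≠ b} = {b} := by ext; simp
    rw [this]; exact measure_singleton b
  have h1 : ∀ᵐ t ∂volume, t ∈ Ioc a b → (K : ℝ≥0∞) ≤ Measure.rnDeriv μ volume t := by
    filter_upwards [key, hd, hbne] with t hGt hdt hne ht
    have htoo : t ∈ Ioo a b := ⟨ht.1, lt_of_le_of_ne ht.2 hne⟩
    obtain ⟨d, hdd, hd0⟩ := hdt htoo
    have hder : HasDerivAt G (d + K) t := by
      have h2 : HasDerivAt (fun u => F u + (K : ℝ) * u) (d + (K : ℝ) * 1) t :=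
        hdd.add ((hasDerivAt_id t).const_mul (K : ℝ))
      rw [mul_one] at h2
      apply h2.congr_of_eventuallyEq
      have : Ioo a b ∈ nhds t := isOpen_Ioo.mem_nhds htoo
      filter_upwards [this] with u hu
      have : p u = u := by
        simp [hp, min_eq_left hu.2.le, max_eq_right hu.1.le]
      simp [hG, this]
    have hun : (Measure.rnDeriv μ volume t).toReal = d + K := hGt.unique hder
    by_cases hr : Measure.rnDeriv μ volume t = ∞
    · simp [hr]
    · calc (K : ℝ≥0∞) = ENNReal.ofReal (K : ℝ) := ENNReal.ofReal_coe_nnreal.symm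
        _ ≤ ENNReal.ofReal ((Measure.rnDeriv μ volume t).toReal) := by
            apply ENNReal.ofReal_le_ofReal; rw [hun]; linarith
        _ = Measure.rnDeriv μ volume t := ENNReal.ofReal_toReal hr
  have h2 : (K : ℝ≥0∞) * volume (Ioc a b) ≤ μ (Ioc a b) := by
    calc (K : ℝ≥0∞) * volume (Ioc a b) = ∫⁻ _ in Ioc a b, (K : ℝ≥0∞) ∂volume :=
          (setLIntegral_const _ _).symm
      _ ≤ ∫⁻ t in Ioc a b, Measure.rnDeriv μ volume t ∂volume :=
          lintegral_mono_ae ((ae_restrict_iff' measurableSet_Ioc).2 h1)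
      _ = (volume.withDensity (Measure.rnDeriv μ volume)) (Ioc a b) :=
          (withDensity_apply _ measurableSet_Ioc).symm
      _ ≤ μ (Ioc a b) := Measure.withDensity_rnDeriv_le μ volume _
  rw [S.measure_Ioc, Real.volume_Ioc] at h2
  have hcoe : (K : ℝ≥0∞) = ENNReal.ofReal (K : ℝ) := ENNReal.ofReal_coe_nnreal.symm
  rw [hcoe, ← ENNReal.ofReal_mul (by positivity)] at h2
  have hGab : G a ≤ G b := hGmono hab
  have h3 : (K : ℝ) * (b - a) ≤ S b - S a := by
    have := (ENNReal.ofReal_le_ofReal_iff (by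
      show (0:ℝ) ≤ S b - S a
      exact sub_nonneg.2 hGab)).1 h2
    exact this
  have hSa : S a = F a + K * a := by show G a = _; simp [hG, hpa]
  have hSb : S b = F b + K * b := by show G b = _; simp [hG, hpb]
  rw [hSa, hSb] at h3
  nlinarith

lemma ae_deriv_nonneg_monotoneOn {F : ℝ → ℝ} {a b : ℝ} {K : ℝ≥0}
    (hlip : LipschitzOnWith K F (Icc a b))
    (hd : ∀ᵐ t ∂(volume : Measure ℝ), t ∈ Ioo a b → ∃ d, HasDerivAt F d t ∧ 0 ≤ d) :
    MonotoneOn F (Icc a b) := by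
  intro x hx y hy hxy
  refine ae_deriv_nonneg_le hxy (hlip.mono (Icc_subset_Icc hx.1 hy.2)) ?_
  filter_upwards [hd] with t ht htm
  exact ht ⟨lt_of_le_of_lt hx.1 htm.1, lt_of_lt_of_le htm.2 hy.2⟩

/-- Gluing: locally monotone on a closed interval implies monotone. -/
lemma monotoneOn_of_locally {F : ℝ → ℝ} {a b : ℝ}
    (hc : ContinuousOn F (Icc a b))
    (h : ∀ x ∈ Icc a b, ∃ δ > (0:ℝ), MonotoneOn F (Icc (x - δ) (x + δ) ∩ Icc a b)) :
    MonotoneOn F (Icc a b) := by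
  intro u hu v hv huv
  set T : Set ℝ := {y ∈ Icc u v | F u ≤ F y} with hT
  have hune : u ∈ T := ⟨⟨le_rfl, huv⟩, le_rfl⟩
  have hTb : BddAbove T := ⟨v, fun y hy => hy.1.2⟩
  have hTc : IsClosed T := by
    have : T = Icc u v ∩ F ⁻¹' Ici (F u) := by ext y; simp [hT, and_comm]
    rw [this]
    exact (hc.mono (Icc_subset_Icc hu.1 hv.2)).preimage_isClosed_of_isClosed
      isClosed_Icc isClosed_Ici
  have hcT : sSup T ∈ T := hTc.csSup_mem ⟨u, hune⟩ hTb
  set c := sSup T with hcdef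
  have hcv : c ≤ v := csSup_le ⟨u, hune⟩ fun y hy => hy.1.2
  rcases eq_or_lt_of_le hcv with heq | hclt
  · exact heq ▸ hcT.2
  · exfalso
    have hcab : c ∈ Icc a b := ⟨le_trans hu.1 hcT.1.1, le_trans hcv hv.2⟩
    obtain ⟨δ, hδ, hmono⟩ := h c hcab
    set y := min v (c + δ) with hy
    have hcy : c < y := lt_min hclt (by linarith)
    have hyIcc : y ∈ Icc u v := ⟨le_trans hcT.1.1 hcy.le, min_le_left _ _⟩
    have hcin : c ∈ Icc (c - δ) (c + δ) ∩ Icc a b :=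
      ⟨⟨by linarith, by linarith⟩, hcab⟩
    have hyin : y ∈ Icc (c - δ) (c + δ) ∩ Icc a b :=
      ⟨⟨by nlinarith [hcy], min_le_right _ _⟩,
        ⟨le_trans hu.1 hyIcc.1, le_trans hyIcc.2 hv.2⟩⟩
    have : F u ≤ F y := le_trans hcT.2 (hmono hcin hyin hcy.le)
    have : y ≤ c := le_csSup hTb ⟨hyIcc, this⟩
    linarith

lemma exists_lip_sub {f h : ℝ → ℝ} {s : Set ℝ}
    (hf : ∃ K : ℝ≥0, LipschitzOnWith K f s) (hh : ∃ K : ℝ≥0, LipschitzOnWith K h s) :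
    ∃ K : ℝ≥0, LipschitzOnWith K (fun x => f x - h x) s := by
  obtain ⟨K1, h1⟩ := hf; obtain ⟨K2, h2⟩ := hh
  refine ⟨K1 + K2, ?_⟩
  rw [lipschitzOnWith_iff_dist_le_mul] at h1 h2 ⊢
  intro x hx y hy
  have e1 := h1 x hx y hy; have e2 := h2 x hx y hy
  simp only [Real.dist_eq, NNReal.coe_add] at *
  calc |f x - h x - (f y - h y)| = |(f x - f y) + -(h x - h y)| := by ring_nf
    _ ≤ |f x - f y| + |-(h x - h y)| := abs_add_le _ _
    _ = |f x - f y| + |h x - h y| := by rw [abs_neg]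
    _ ≤ (K1 : ℝ) * |x - y| + K2 * |x - y| := add_le_add e1 e2
    _ = (K1 + K2 : ℝ) * |x - y| := by ring

lemma exists_lip_mul {f h : ℝ → ℝ} {s : Set ℝ} {A B : ℝ}
    (hf : ∃ K : ℝ≥0, LipschitzOnWith K f s) (hh : ∃ K : ℝ≥0, LipschitzOnWith K h s)
    (hA : ∀ x ∈ s, |f x| ≤ A) (hB : ∀ x ∈ s, |h x| ≤ B) :
    ∃ K : ℝ≥0, LipschitzOnWith K (fun x => f x * h x) s := by
  obtain ⟨K1, h1⟩ := hf; obtain ⟨K2, h2⟩ := hh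
  refine ⟨Real.toNNReal (A * K2 + B * K1), ?_⟩
  rw [lipschitzOnWith_iff_dist_le_mul] at h1 h2 ⊢
  intro x hx y hy
  have e1 := h1 x hx y hy; have e2 := h2 x hx y hy
  have hA' := hA x hx; have hB' := hB y hy
  have hfa := abs_nonneg (f x); have hhb := abs_nonneg (h y)
  simp only [Real.dist_eq] at *
  rw [Real.coe_toNNReal']
  have step : |f x * h x - f y * h y| ≤ |f x| * |h x - h y| + |h y| * |f x - f y| := by
    calc |f x * h x - f y * h y| = |f x * (h x - h y) + h y * (f x - f y)| := by ring_nf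
      _ ≤ |f x * (h x - h y)| + |h y * (f x - f y)| := abs_add_le _ _
      _ = |f x| * |h x - h y| + |h y| * |f x - f y| := by rw [abs_mul, abs_mul]
  have habs : (0:ℝ) ≤ |x - y| := abs_nonneg _
  have t1 : |f x| * |h x - h y| ≤ A * ((K2 : ℝ) * |x - y|) :=
    mul_le_mul hA' e2 (abs_nonneg _) (le_trans hfa hA')
  have t2 : |h y| * |f x - f y| ≤ B * ((K1 : ℝ) * |x - y|) :=
    mul_le_mul hB' e1 (abs_nonneg _) (le_trans hhb hB')
  have : |f x * h x - f y * h y| ≤ (A * K2 + B * K1) * |x - y| := by nlinarith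
  exact le_trans this (mul_le_mul_of_nonneg_right (le_max_left _ _) habs)

lemma exists_lip_of_deriv {f f' : ℝ → ℝ} {c d : ℝ}
    (h : ∀ x ∈ Icc c d, HasDerivAt f (f' x) x) (hc : ContinuousOn f' (Icc c d)) :
    ∃ K : ℝ≥0, LipschitzOnWith K f (Icc c d) := by
  obtain ⟨C, hC⟩ := isCompact_Icc.exists_bound_of_continuousOn hc
  refine ⟨Real.toNNReal C, (convex_Icc c d).lipschitzOnWith_of_nnnorm_hasDerivWithin_le
    (fun x hx => (h x hx).hasDerivWithinAt) (fun x hx => ?_)⟩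
  rw [← NNReal.coe_le_coe, coe_nnnorm, Real.coe_toNNReal']
  exact le_trans (hC x hx) (le_max_left _ _)

lemma coth_sq_id {b ε' : ℝ} (hb : 0 < b) {t : ℝ} (ht : t < ε') :
    (b * coth (b * (ε' - t)))^2 - b^2 = b^2 / (Real.sinh (b * (ε' - t)))^2 := by
  have hs : 0 < Real.sinh (b * (ε' - t)) := Real.sinh_pos_iff.2 (by nlinarith)
  have hid := Real.cosh_sq_sub_sinh_sq (b * (ε' - t))
  unfold coth
  field_simp
  nlinarith [hid]

lemma hasDerivAt_bcoth {b ε' : ℝ} (hb : 0 < b) {t : ℝ} (ht : t < ε') :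
    HasDerivAt (fun t => b * coth (b * (ε' - t))) ((b * coth (b * (ε' - t)))^2 - b^2) t := by
  have hs : 0 < Real.sinh (b * (ε' - t)) := Real.sinh_pos_iff.2 (by nlinarith)
  have hw : HasDerivAt (fun t : ℝ => b * (ε' - t)) (-b) t := by
    have h1 : HasDerivAt (fun t : ℝ => ε' - t) (-1) t := (hasDerivAt_id t).const_sub ε'
    simpa using h1.const_mul b
  have hsinh : HasDerivAt (fun t : ℝ => Real.sinh (b * (ε' - t)))
      (Real.cosh (b * (ε' - t)) * (-b)) t := (Real.hasDerivAt_sinh _).comp t hw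
  have hcosh : HasDerivAt (fun t : ℝ => Real.cosh (b * (ε' - t)))
      (Real.sinh (b * (ε' - t)) * (-b)) t := (Real.hasDerivAt_cosh _).comp t hw
  have hq : HasDerivAt (fun y => b * (Real.cosh (b * (ε' - y)) / Real.sinh (b * (ε' - y))))
      (b * ((Real.sinh (b * (ε' - t)) * -b * Real.sinh (b * (ε' - t))
        - Real.cosh (b * (ε' - t)) * (Real.cosh (b * (ε' - t)) * -b))
        / Real.sinh (b * (ε' - t)) ^ 2)) t := (hcosh.div hsinh hs.ne').const_mul b
  convert hq using 1
  · rfl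
  rw [coth_sq_id hb ht]
  have hid := Real.cosh_sq_sub_sinh_sq (b * (ε' - t))
  field_simp
  nlinarith [hid]

theorem stmt_13 (ε' b : ℝ) (hε' : 0 < ε') (hb : 0 < b)
    (s : ℝ → ℝ) (hcont : ContinuousOn s (Icc 0 ε'))
    (hlip : LocallyLipschitzOn (Ico 0 ε') s)
    (hineq : ∀ᵐ t ∂(volume : Measure ℝ), t ∈ Ico 0 ε' →
      ∃ d : ℝ, HasDerivWithinAt s d (Ico 0 ε') t ∧ -d + (s t) ^ 2 - b ^ 2 ≤ 0) :
    (b * coth (b * ε') ≤ s 0 → ∀ t ∈ Ico 0 ε', b * coth (b * (ε' - t)) ≤ s t) ∧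
    ¬ (b * coth (b * ε') < s 0) := by
  set g : ℝ → ℝ := fun t => b * coth (b * (ε' - t)) with hgdef
  have hg_deriv : ∀ t < ε', HasDerivAt g ((g t)^2 - b^2) t := fun t ht => hasDerivAt_bcoth hb ht
  have main : b * coth (b * ε') ≤ s 0 → ∀ t ∈ Ico 0 ε', g t ≤ s t := by
    intro h0 t₁ ht₁
    by_contra hlt
    push_neg at hlt
    have ht₁0 : 0 ≤ t₁ := ht₁.1
    have ht₁ε : t₁ < ε' := ht₁.2
    have hsub : Icc 0 t₁ ⊆ Icc 0 ε' := Icc_subset_Icc le_rfl ht₁ε.le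
    have hsubI : Icc 0 t₁ ⊆ Ico 0 ε' := fun y hy => ⟨hy.1, lt_of_le_of_lt hy.2 ht₁ε⟩
    have hgc : ContinuousOn g (Icc 0 t₁) := fun t ht =>
      ((hg_deriv t (lt_of_le_of_lt ht.2 ht₁ε)).continuousAt).continuousWithinAt
    have hsc : ContinuousOn s (Icc 0 t₁) := hcont.mono hsub
    set u : ℝ → ℝ := fun t => g t - s t with hudef
    have hu0 : u 0 ≤ 0 := by
      have : g 0 = b * coth (b * ε') := by simp [hgdef]
      simp only [hudef, this]; linarith
    have hut₁ : 0 < u t₁ := by simp only [hudef]; linarith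
    have huc : ContinuousOn u (Icc 0 t₁) := hgc.sub hsc
    set T : Set ℝ := {t ∈ Icc 0 t₁ | u t ≤ 0} with hT
    have h0T : (0:ℝ) ∈ T := ⟨⟨le_rfl, ht₁0⟩, hu0⟩
    have hTb : BddAbove T := ⟨t₁, fun y hy => hy.1.2⟩
    have hTc : IsClosed T := by
      have : T = Icc 0 t₁ ∩ u ⁻¹' Iic 0 := by ext y; simp [hT, and_comm]
      rw [this]
      exact huc.preimage_isClosed_of_isClosed isClosed_Icc isClosed_Iic
    have ht₀T : sSup T ∈ T := hTc.csSup_mem ⟨0, h0T⟩ hTb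
    set t₀ := sSup T with ht₀def
    have ht₀0 : 0 ≤ t₀ := le_csSup hTb h0T
    have ht₀t₁ : t₀ ≤ t₁ := ht₀T.1.2
    have ht₀lt : t₀ < t₁ := lt_of_le_of_ne ht₀t₁ (by
      intro h; rw [h] at ht₀T; linarith [ht₀T.2])
    have hpos : ∀ t, t₀ < t → t ≤ t₁ → 0 < u t := by
      intro t htt₀ htt₁
      by_contra hn
      push_neg at hn
      have : t ∈ T := ⟨⟨le_trans ht₀0 htt₀.le, htt₁⟩, hn⟩
      exact absurd (le_csSup hTb this) (not_le.2 htt₀)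
    obtain ⟨M, hM⟩ := isCompact_Icc.exists_bound_of_continuousOn (hgc.add hsc)
    have hMb : ∀ t ∈ Icc 0 t₁, g t + s t ≤ M := fun t ht =>
      le_trans (le_abs_self _) (hM t ht)
    set F : ℝ → ℝ := fun t => (s t - g t) * Real.exp (-M * t) with hFdef
    have hexp_deriv : ∀ t : ℝ, HasDerivAt (fun t => Real.exp (-M * t))
        (Real.exp (-M * t) * (-M)) t := by
      intro t
      have h1 : HasDerivAt (fun t : ℝ => -M * t) (-M) t := by
        simpa using (hasDerivAt_id t).const_mul (-M)
      exact (Real.hasDerivAt_exp _).comp t h1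
    have hmono : MonotoneOn F (Icc t₀ t₁) := by
      apply monotoneOn_of_locally
      · exact ((hsc.sub hgc).mono (Icc_subset_Icc ht₀0 le_rfl)).mul
          (Real.continuous_exp.comp (continuous_const.mul continuous_id)).continuousOn
      · intro x hx
        have hx01 : x ∈ Icc 0 t₁ := ⟨le_trans ht₀0 hx.1, hx.2⟩
        have hxI : x ∈ Ico 0 ε' := hsubI hx01
        obtain ⟨Kx, tset, htset, hKx⟩ := hlip hxI
        obtain ⟨δ, hδ0, hδ⟩ := Metric.mem_nhdsWithin_iff.1 htset
        set δ' := δ / 2 with hδ'def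
        refine ⟨δ', by positivity, ?_⟩
        have hsubJ : Icc (x - δ') (x + δ') ∩ Icc t₀ t₁ ⊆ tset := by
          intro y hy
          apply hδ
          constructor
          · rw [Metric.mem_ball, Real.dist_eq, abs_sub_lt_iff]
            constructor
            · linarith [hy.1.2]
            · linarith [hy.1.1]
          · exact hsubI ⟨le_trans ht₀0 hy.2.1, hy.2.2⟩
        rw [Icc_inter_Icc]
        set c := max (x - δ') t₀ with hcdef
        set d := min (x + δ') t₁ with hddef
        have hcx : c ≤ x := max_le (by linarith) hx.1
        have hxd : x ≤ d := le_min (by linarith) hx.2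
        have hcd : c ≤ d := le_trans hcx hxd
        have hc0 : 0 ≤ c := le_trans ht₀0 (le_max_right _ _)
        have hdt₁ : d ≤ t₁ := min_le_right _ _
        have hct₀ : t₀ ≤ c := le_max_right _ _
        have hJsub : Icc c d ⊆ Icc 0 t₁ := Icc_subset_Icc hc0 hdt₁
        have hJtset : Icc c d ⊆ tset := by
          rw [hcdef, hddef, ← Icc_inter_Icc]
          exact hsubJ
        -- Lipschitz data
        have hlips : ∃ K : ℝ≥0, LipschitzOnWith K s (Icc c d) := ⟨Kx, hKx.mono hJtset⟩
        have hlipg : ∃ K : ℝ≥0, LipschitzOnWith K g (Icc c d) := by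
          apply exists_lip_of_deriv (f' := fun t => (g t)^2 - b^2)
          · exact fun y hy => hg_deriv y (lt_of_le_of_lt (hy.2.trans hdt₁) ht₁ε)
          · exact ((hgc.mono hJsub).pow 2).sub continuousOn_const
        have hlipsg : ∃ K : ℝ≥0, LipschitzOnWith K (fun t => s t - g t) (Icc c d) :=
          exists_lip_sub hlips hlipg
        have hlipe : ∃ K : ℝ≥0, LipschitzOnWith K (fun t => Real.exp (-M * t)) (Icc c d) := by
          apply exists_lip_of_deriv (f' := fun t => Real.exp (-M * t) * (-M))
          · exact fun y _ => hexp_deriv y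
          · exact ((Real.continuous_exp.comp (continuous_const.mul continuous_id)).continuousOn).mul
              continuousOn_const
        obtain ⟨A, hA⟩ := isCompact_Icc.exists_bound_of_continuousOn
          ((hsc.sub hgc).mono hJsub)
        obtain ⟨B, hB⟩ := isCompact_Icc.exists_bound_of_continuousOn
          (((Real.continuous_exp.comp (continuous_const.mul continuous_id)).continuousOn
            (s := Icc c d)) : ContinuousOn (fun t => Real.exp (-M * t)) (Icc c d))
        have hlipF : ∃ K : ℝ≥0, LipschitzOnWith K F (Icc c d) :=
          exists_lip_mul hlipsg hlipe hA hB
        obtain ⟨KF, hKF⟩ := hlipF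
        apply ae_deriv_nonneg_monotoneOn hKF
        filter_upwards [hineq] with t ht htm
        have ht0 : 0 < t := lt_of_le_of_lt hc0 htm.1
        have htε : t < ε' := lt_of_lt_of_le htm.2 (le_trans hdt₁ ht₁ε.le)
        obtain ⟨dv, hdv, hineq'⟩ := ht ⟨ht0.le, htε⟩
        have hdv' : HasDerivAt s dv t := hdv.hasDerivAt (Ico_mem_nhds ht0 htε)
        have ht01 : t ∈ Icc 0 t₁ := ⟨ht0.le, le_trans htm.2.le hdt₁⟩
        have hut : 0 < u t := hpos t (lt_of_le_of_lt hct₀ htm.1) ht01.2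
        have hgt' := hg_deriv t htε
        have hder : HasDerivAt F
            ((dv - ((g t)^2 - b^2)) * Real.exp (-M * t)
              + (s t - g t) * (Real.exp (-M * t) * (-M))) t :=
          (hdv'.sub hgt').mul (hexp_deriv t)
        refine ⟨_, hder, ?_⟩
        have hMt : g t + s t ≤ M := hMb t ht01
        have hexp0 : 0 < Real.exp (-M * t) := Real.exp_pos _
        have key : 0 ≤ (dv - ((g t)^2 - b^2)) - M * (s t - g t) := by
          have hu' : 0 < g t - s t := hut
          nlinarith [mul_le_mul_of_nonneg_left hMt hu'.le]
        have : (dv - ((g t)^2 - b^2)) * Real.exp (-M * t)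
              + (s t - g t) * (Real.exp (-M * t) * (-M))
            = ((dv - ((g t)^2 - b^2)) - M * (s t - g t)) * Real.exp (-M * t) := by ring
        rw [this]
        positivity
    have hF0 : 0 ≤ F t₀ := by
      have : 0 ≤ s t₀ - g t₀ := by have := ht₀T.2; simp only [hudef] at this; linarith
      exact mul_nonneg this (Real.exp_pos _).le
    have hF1 : F t₁ < 0 := by
      apply mul_neg_of_neg_of_pos _ (Real.exp_pos _)
      simp only [hudef] at hut₁; linarith
    have := hmono (left_mem_Icc.2 ht₀t₁) (right_mem_Icc.2 ht₀t₁) ht₀t₁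
    linarith
  constructor
  · exact main
  · intro hlt
    have main' := main hlt.le
    obtain ⟨C, hC⟩ := isCompact_Icc.exists_bound_of_continuousOn hcont
    have hC0 : s 0 ≤ C := le_trans (le_abs_self _) (hC 0 ⟨le_rfl, hε'.le⟩)
    have hcoth_pos : 0 < b * coth (b * ε') := by
      have h1 : 0 < Real.sinh (b * ε') := Real.sinh_pos_iff.2 (by positivity)
      have h2 : 0 < Real.cosh (b * ε') := Real.cosh_pos _
      unfold coth
      positivity
    have hCpos : 0 < C := lt_of_lt_of_le (lt_trans hcoth_pos hlt) hC0
    obtain ⟨δ, hδ0, hδ⟩ := Metric.continuous_iff.1 Real.continuous_sinh 0 (b / C) (by positivity)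
    set η := min ε' (δ / (2 * b)) with hηdef
    have hη0 : 0 < η := lt_min hε' (by positivity)
    have hηε : η ≤ ε' := min_le_left _ _
    have hbη : b * η < δ := by
      have : η ≤ δ / (2 * b) := min_le_right _ _
      have h2 : b * η ≤ δ / 2 := by
        rw [div_mul_eq_div_div] at this
        calc b * η ≤ b * (δ / 2 / b) := by nlinarith
          _ = δ / 2 := by field_simp
      linarith
    have hsinh_small : Real.sinh (b * η) < b / C := by
      have := hδ (b * η) (by rw [Real.dist_eq, sub_zero, abs_of_pos (by positivity)]; exact hbη)
      rw [Real.dist_eq, Real.sinh_zero, sub_zero] at this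
      exact lt_of_le_of_lt (le_abs_self _) this
    have hsinh_pos : 0 < Real.sinh (b * η) := Real.sinh_pos_iff.2 (by positivity)
    set t := ε' - η with htdef
    have htI : t ∈ Ico 0 ε' := ⟨by linarith, by linarith⟩
    have hst := main' t htI
    have hεt : ε' - t = η := by simp [htdef]
    have hgt : g t = b * coth (b * η) := by simp only [hgdef]; rw [hεt]
    rw [hgt] at hst
    have hcoth_ge : b / Real.sinh (b * η) ≤ b * coth (b * η) := by
      have h1 : 1 ≤ Real.cosh (b * η) := Real.one_le_cosh _
      have h2 : b ≤ b * Real.cosh (b * η) := by nlinarith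
      calc b / Real.sinh (b * η) ≤ b * Real.cosh (b * η) / Real.sinh (b * η) := by
            apply div_le_div_of_nonneg_right h2 hsinh_pos.le |>.trans_eq rfl
        _ = b * coth (b * η) := by unfold coth; ring
    have hbig : C < b / Real.sinh (b * η) := by
      rw [lt_div_iff₀ hsinh_pos]
      have := (lt_div_iff₀ hCpos).1 hsinh_small
      nlinarith
    have hsC : s t ≤ C := le_trans (le_abs_self _) (hC t ⟨htI.1, htI.2.le⟩)
    linarith
end

section
/- Let ε > 0, a > 0, and suppose s : [0, ε) → ℝ is locally Lipschitz with −s'(t) + s(t)² − a² ≥ 0 almost everywhere and s(0) ≤ a·coth(aε). Then for every t ∈ [0, ε), s(t) ≤ a·coth(a(ε − t)); in particular s is bounded above on every compact subinterval [0, T] with T < ε by a·coth(a(ε − T)). -/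
open Real Set MeasureTheory Filter Topology

lemma coth_pos {x : ℝ} (hx : 0 < x) : 0 < coth x :=
  div_pos (Real.cosh_pos _) (Real.sinh_pos_iff.mpr hx)

lemma coth_anti {x y : ℝ} (hx : 0 < x) (hxy : x ≤ y) : coth y ≤ coth x := by
  have hy : 0 < y := lt_of_lt_of_le hx hxy
  have hsx := Real.sinh_pos_iff.mpr hx
  have hsy := Real.sinh_pos_iff.mpr hy
  rw [coth, coth, div_le_div_iff₀ hsy hsx]
  have h : 0 ≤ Real.sinh (y - x) := by
    rw [show (0:ℝ) = Real.sinh 0 by simp]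
    exact Real.sinh_le_sinh.mpr (by linarith)
  rw [Real.sinh_sub] at h
  nlinarith [Real.cosh_pos x, Real.cosh_pos y]

/-- derivative of the barrier `t ↦ a * coth (a * (ε - t))`. -/
lemma hasDerivAt_barrier (a ε : ℝ) (ha : 0 < a) {t : ℝ} (ht : t < ε) :
    HasDerivAt (fun t => a * coth (a * (ε - t)))
      ((a * coth (a * (ε - t))) ^ 2 - a ^ 2) t := by
  have hu : HasDerivAt (fun t : ℝ => a * (ε - t)) (-a) t := by
    simpa using ((hasDerivAt_id t).const_sub ε).const_mul a
  have hupos : 0 < a * (ε - t) := mul_pos ha (by linarith)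
  have hsne : Real.sinh (a * (ε - t)) ≠ 0 := ne_of_gt (Real.sinh_pos_iff.mpr hupos)
  have hcosh : HasDerivAt (fun t : ℝ => Real.cosh (a * (ε - t)))
      (Real.sinh (a * (ε - t)) * (-a)) t := (Real.hasDerivAt_cosh _).comp t hu
  have hsinh : HasDerivAt (fun t : ℝ => Real.sinh (a * (ε - t)))
      (Real.cosh (a * (ε - t)) * (-a)) t := (Real.hasDerivAt_sinh _).comp t hu
  have hdiv := (hcosh.div hsinh hsne).const_mul a
  refine hdiv.congr_deriv ?_
  have hid : Real.cosh (a * (ε - t)) ^ 2 - Real.sinh (a * (ε - t)) ^ 2 = 1 :=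
    Real.cosh_sq_sub_sinh_sq _
  simp only [coth]
  field_simp
  nlinarith [hid, sq_nonneg (Real.sinh (a*(ε-t)))]


/-- A locally Lipschitz function on `A` has uniformly bounded slopes on a compact `C ⊆ A`. -/
lemma lipschitz_on_compact {s : ℝ → ℝ} {A C : Set ℝ} (hC : IsCompact C) (hCA : C ⊆ A)
    (hs : LocallyLipschitzOn A s) :
    ∃ L : ℝ, 0 ≤ L ∧ ∀ x ∈ C, ∀ z ∈ C, |s z - s x| ≤ L * |z - x| := by
  -- local data
  have hloc : ∀ x : C, ∃ (K : NNReal) (U : Set ℝ), IsOpen U ∧ (x : ℝ) ∈ U ∧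
      LipschitzOnWith K s (U ∩ A) := by
    rintro ⟨x, hx⟩
    obtain ⟨K, t, ht, hK⟩ := hs (hCA hx)
    obtain ⟨U, hUo, hxU, hUt⟩ := mem_nhdsWithin.1 ht
    exact ⟨K, U, hUo, hxU, hK.mono hUt⟩
  choose K U hUo hxU hKlip using hloc
  -- Lebesgue number
  have hcover : C ⊆ ⋃ i : C, U i := fun x hx => mem_iUnion.2 ⟨⟨x, hx⟩, hxU _⟩
  obtain ⟨t, ht⟩ := hC.elim_finite_subcover U hUo hcover
  rcases eq_or_ne C ∅ with rfl | hne
  · exact ⟨0, le_refl 0, by simp⟩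
  have htne : t.Nonempty := by
    rcases nonempty_iff_ne_empty.2 hne with ⟨x, hx⟩
    rcases mem_iUnion₂.1 (ht hx) with ⟨i, hi, _⟩
    exact ⟨i, hi⟩
  obtain ⟨δ, hδ, hball⟩ := lebesgue_number_lemma_of_metric (c := fun i : t => U i) hC
    (fun i => hUo i) (fun x hx => by
      rcases mem_iUnion₂.1 (ht hx) with ⟨i, hi, hxi⟩
      exact mem_iUnion.2 ⟨⟨i, hi⟩, hxi⟩)
  -- bound on s
  obtain ⟨M, hM⟩ := hC.exists_bound_of_continuousOn (hs.continuousOn.mono hCA)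
  have hM0 : 0 ≤ M := by
    rcases nonempty_iff_ne_empty.2 hne with ⟨x, hx⟩
    exact le_trans (norm_nonneg _) (hM x hx)
  -- max of the finitely many constants
  set Kmax : NNReal := t.sup (fun i => K i) with hKmax
  refine ⟨max (2 * M / δ) Kmax, le_trans (by positivity) (le_max_left _ _), ?_⟩
  intro x hx z hz
  rcases lt_or_ge (dist z x) δ with hlt | hge
  · obtain ⟨i, hi⟩ := hball x hx
    have hxi : x ∈ U i := hi (Metric.mem_ball_self hδ)
    have hzi : z ∈ U i := hi (by simpa [Metric.mem_ball] using hlt)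
    have := (hKlip i).dist_le_mul z ⟨hzi, hCA hz⟩ x ⟨hxi, hCA hx⟩
    rw [Real.dist_eq, Real.dist_eq] at this
    calc |s z - s x| ≤ (K i : ℝ) * |z - x| := this
      _ ≤ max (2 * M / δ) Kmax * |z - x| := by
          apply mul_le_mul_of_nonneg_right _ (abs_nonneg _)
          exact le_trans (by exact_mod_cast Finset.le_sup i.2) (le_max_right _ _)
  · have h1 : |s z - s x| ≤ 2 * M := by
      have := hM x hx; have := hM z hz
      rw [Real.norm_eq_abs] at *
      have := abs_sub_abs_le_abs_sub (s z) (s x)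
      have := abs_sub (s z) (s x)
      calc |s z - s x| ≤ |s z| + |s x| := abs_sub _ _
        _ ≤ 2 * M := by linarith [hM x hx, hM z hz]
    have h2 : δ ≤ |z - x| := by rwa [Real.dist_eq] at hge
    calc |s z - s x| ≤ 2 * M := h1
      _ = (2 * M / δ) * δ := by field_simp
      _ ≤ (2 * M / δ) * |z - x| := by
          apply mul_le_mul_of_nonneg_left h2 (by positivity)
      _ ≤ max (2 * M / δ) Kmax * |z - x| :=
          mul_le_mul_of_nonneg_right (le_max_left _ _) (abs_nonneg _)

set_option maxHeartbeats 2000000 in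
lemma core (ε a : ℝ) (hε : 0 < ε) (ha : 0 < a)
    (s : ℝ → ℝ) (hs : LocallyLipschitzOn (Ico 0 ε) s)
    (hineq : ∀ᵐ t ∂(volume : Measure ℝ), t ∈ Ico 0 ε →
      ∃ d : ℝ, HasDerivWithinAt s d (Ico 0 ε) t ∧ 0 ≤ -d + (s t) ^ 2 - a ^ 2)
    (h0 : s 0 ≤ a * coth (a * ε))
    (T' : ℝ) (hT0 : 0 ≤ T') (hTε : T' < ε) :
    ∀ x ∈ Icc 0 T', s x ≤ a * coth (a * (ε - x)) := by
  classical
  set bb : ℝ → ℝ := fun t => a * coth (a * (ε - t)) with hbbdef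
  clear_value bb
  have hbmono : ∀ t t' : ℝ, 0 ≤ t → t ≤ t' → t' < ε → bb t ≤ bb t' := by
    intro t t' ht htt' ht'
    rw [hbbdef]
    apply mul_le_mul_of_nonneg_left _ ha.le
    exact coth_anti (mul_pos ha (by linarith)) (by nlinarith)
  set T'' : ℝ := (T' + ε) / 2 with hT''def
  clear_value T''
  have hT'T'' : T' < T'' := by simp only [hT''def]; linarith
  have hT''ε : T'' < ε := by simp only [hT''def]; linarith
  have hT''0 : 0 ≤ T'' := by linarith
  have hsub : Icc 0 T'' ⊆ Ico 0 ε := fun x hx => ⟨hx.1, lt_of_le_of_lt hx.2 hT''ε⟩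
  have hsub' : Icc 0 T' ⊆ Ico 0 ε := fun x hx => ⟨hx.1, lt_of_le_of_lt hx.2 hTε⟩
  obtain ⟨L, hL0, hLip⟩ := lipschitz_on_compact isCompact_Icc hsub hs
  have hbbcont : ContinuousOn bb (Icc 0 T') := by
    rw [hbbdef]
    exact fun x hx =>
      ((hasDerivAt_barrier a ε ha (lt_of_le_of_lt hx.2 hTε)).continuousAt).continuousWithinAt
  obtain ⟨M, hM⟩ := isCompact_Icc.exists_bound_of_continuousOn (hs.continuousOn.mono hsub')
  have hM0 : 0 ≤ M := le_trans (norm_nonneg _) (hM 0 ⟨le_refl 0, hT0⟩)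
  set K : ℝ := max 1 (M + bb T') with hKdef
  clear_value K
  have hK1 : (1:ℝ) ≤ K := by rw [hKdef]; exact le_max_left _ _
  have hK0 : (0:ℝ) < K := lt_of_lt_of_le one_pos hK1
  have hKs : ∀ x ∈ Icc 0 T', s x + bb x ≤ K := by
    intro x hx
    have h1 : s x ≤ M := le_trans (le_abs_self _)
      (by simpa [Real.norm_eq_abs] using hM x hx)
    have h2 : bb x ≤ bb T' := hbmono x T' hx.1 hx.2 hTε
    have := le_max_right 1 (M + bb T')
    rw [hKdef]
    linarith
  set C : ℝ := L + 1 with hCdef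
  clear_value C
  have hC0 : (0:ℝ) < C := by rw [hCdef]; linarith
  -- main eta-estimate
  have main : ∀ η : ℝ, 0 < η → ∀ x ∈ Icc 0 T',
      s x - bb x ≤ η * (Real.exp (2*K*T') + 1) := by
    intro η hη
    set δ : ℝ := η / (2*C) with hδdef
    clear_value δ
    have hδ0 : 0 < δ := by rw [hδdef]; positivity
    have hnull : volume {t | ¬(t ∈ Ico (0:ℝ) ε → ∃ d : ℝ,
        HasDerivWithinAt s d (Ico 0 ε) t ∧ 0 ≤ -d + (s t) ^ 2 - a ^ 2)} = 0 :=
      ae_iff.mp hineq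
    obtain ⟨U, hNU, hUo, hUμ⟩ := Set.exists_isOpen_lt_of_lt _ (ENNReal.ofReal δ)
      (by rw [hnull]; exact ENNReal.ofReal_pos.mpr hδ0)
    set w : ℝ → ℝ := fun t => (volume (U ∩ Ioc 0 t)).toReal with hwdef
    clear_value w
    have hwfin : ∀ t : ℝ, volume (U ∩ Ioc 0 t) ≠ ⊤ := fun t =>
      (lt_of_le_of_lt (measure_mono inter_subset_right)
        (by rw [Real.volume_Ioc]; exact ENNReal.ofReal_lt_top)).ne
    have hwadd : ∀ x z : ℝ, 0 ≤ x → x ≤ z →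
        w z = w x + (volume (U ∩ Ioc x z)).toReal := by
      intro x z hx hxz
      have hsplit : Ioc (0:ℝ) z = Ioc 0 x ∪ Ioc x z := (Ioc_union_Ioc_eq_Ioc hx hxz).symm
      have hmeas : volume (U ∩ Ioc 0 z) = volume (U ∩ Ioc 0 x) + volume (U ∩ Ioc x z) := by
        rw [hsplit, inter_union_distrib_left, measure_union
          (disjoint_of_subset inter_subset_right inter_subset_right (Ioc_disjoint_Ioc_of_le le_rfl))
          (hUo.measurableSet.inter measurableSet_Ioc)]
      simp only [hwdef, hmeas]
      rw [ENNReal.toReal_add (by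
        exact (lt_of_le_of_lt (measure_mono inter_subset_right)
          (by rw [Real.volume_Ioc]; exact ENNReal.ofReal_lt_top)).ne) (by
        exact (lt_of_le_of_lt (measure_mono inter_subset_right)
          (by rw [Real.volume_Ioc]; exact ENNReal.ofReal_lt_top)).ne)]
    have hwfacts : ∀ x z : ℝ, 0 ≤ x → x ≤ z → 0 ≤ w z - w x ∧ w z - w x ≤ z - x := by
      intro x z hx hxz
      rw [hwadd x z hx hxz]
      constructor
      · simp [ENNReal.toReal_nonneg]
      · have h1 : volume (U ∩ Ioc x z) ≤ ENNReal.ofReal (z - x) := by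
          rw [← Real.volume_Ioc]; exact measure_mono inter_subset_right
        have := ENNReal.toReal_le_of_le_ofReal (by linarith) h1
        linarith
    have hwlip : LipschitzOnWith 1 w (Ici 0) := by
      apply LipschitzOnWith.of_dist_le_mul
      intro x hx y hy
      rw [NNReal.coe_one, one_mul]
      rcases le_total x y with h | h
      · have := hwfacts x y hx h
        rw [Real.dist_eq, Real.dist_eq, abs_sub_comm, abs_of_nonneg this.1,
          abs_of_nonpos (by linarith)]
        linarith [this.2]
      · have := hwfacts y x hy h
        rw [Real.dist_eq, Real.dist_eq, abs_of_nonneg this.1, abs_of_nonneg (by linarith)]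
        linarith [this.2]
    have hwcont : ContinuousOn w (Icc 0 T') :=
      hwlip.continuousOn.mono (fun x hx => hx.1)
    have hw0 : w 0 = 0 := by simp [hwdef]
    have hwδ : ∀ t : ℝ, w t < δ := by
      intro t
      rw [hwdef]
      have h1 : volume (U ∩ Ioc 0 t) ≤ volume U := measure_mono inter_subset_left
      exact lt_of_le_of_lt
        (ENNReal.toReal_mono (by exact (lt_of_lt_of_le hUμ le_top).ne) h1)
        (ENNReal.toReal_lt_of_lt_ofReal hUμ)
    have hwnn : ∀ t : ℝ, 0 ≤ w t := by
      intro t; rw [hwdef]; exact ENNReal.toReal_nonneg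
    have hwslope : ∀ x : ℝ, 0 ≤ x → x ∈ U → ∀ᶠ z in 𝓝[>] x, w z - w x = z - x := by
      intro x hx0 hxU
      obtain ⟨r, hr, hball⟩ := Metric.isOpen_iff.1 hUo x hxU
      filter_upwards [Ioo_mem_nhdsGT (by linarith : x < x + r)] with z hz
      have hsub2 : Ioc x z ⊆ U := by
        intro y hy
        apply hball
        rw [Metric.mem_ball, Real.dist_eq, abs_of_pos (by linarith [hy.1] : (0:ℝ) < y - x)]
        have := hy.2; have := hz.2; linarith
      rw [hwadd x z hx0 hz.1.le, inter_eq_self_of_subset_right hsub2, Real.volume_Ioc,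
        ENNReal.toReal_ofReal (by linarith [hz.1] : (0:ℝ) ≤ z - x)]
      ring
    set P : ℝ → Prop := fun x => ∃ d : ℝ,
      HasDerivWithinAt s d (Ico 0 ε) x ∧ 0 ≤ -d + (s x) ^ 2 - a ^ 2 with hPdef
    set f : ℝ → ℝ := fun t => s t - bb t - C * w t with hfdef
    clear_value f
    set f' : ℝ → ℝ := fun x =>
      if h : P x then h.choose - ((bb x)^2 - a^2) else L - C with hf'def
    clear_value f'
    set B : ℝ → ℝ := fun t => η * Real.exp (2*K*t) with hBdef
    clear_value B
    have hBval : ∀ x : ℝ, B x = η * Real.exp (2*K*x) := by intro x; rw [hBdef]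
    have hB : ∀ x : ℝ, HasDerivAt B (2*K*(B x)) x := by
      intro x
      rw [hBdef]
      show HasDerivAt (fun t => η * Real.exp (2*K*t)) (2*K*(η * Real.exp (2*K*x))) x
      have h := (((hasDerivAt_id x).const_mul (2*K)).exp).const_mul η
      refine h.congr_deriv ?_
      simp only [id_eq]; ring
    have hfcont : ContinuousOn f (Icc 0 T') := by
      rw [hfdef]
      exact ((hs.continuousOn.mono hsub').sub hbbcont).sub (continuousOn_const.mul hwcont)
    have ha0 : f 0 ≤ B 0 := by
      simp only [hfdef, hBdef, hw0, mul_zero, sub_zero, Real.exp_zero, mul_one, hbbdef]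
      linarith
    have hf' : ∀ x ∈ Ico 0 T', ∀ r, f' x < r → ∃ᶠ z in 𝓝[>] x, slope f x z < r := by
      intro x hx r hr
      have hx0 : 0 ≤ x := hx.1
      have hxε : x < ε := lt_trans hx.2 hTε
      apply Filter.Eventually.frequently
      by_cases hg : P x
      · rw [hf'def] at hr
        simp only [dif_pos hg] at hr
        obtain ⟨hd, -⟩ := hg.choose_spec
        have hder : HasDerivWithinAt (fun t => s t - bb t)
            (hg.choose - ((bb x)^2 - a^2)) (Ico 0 ε) x := by
          rw [hbbdef]
          exact hd.sub ((hasDerivAt_barrier a ε ha hxε).hasDerivWithinAt)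
        have htend : Tendsto (slope (fun t => s t - bb t) x) (𝓝[>] x)
            (𝓝 (hg.choose - ((bb x)^2 - a^2))) := by
          have h1 := hasDerivWithinAt_iff_tendsto_slope.mp hder
          apply h1.mono_left
          rw [← nhdsWithin_Ioo_eq_nhdsGT hxε]
          exact nhdsWithin_mono x (fun y hy =>
            ⟨⟨by linarith [hy.1], hy.2⟩, by simp [ne_of_gt hy.1]⟩)
        have hev := htend.eventually_lt_const hr
        filter_upwards [hev, self_mem_nhdsWithin] with z hz1 hz2
        have hzx : x < z := hz2
        have hwz := (hwfacts x z hx0 hzx.le).1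
        have hnum : f z - f x ≤ (s z - bb z) - (s x - bb x) := by
          simp only [hfdef]
          nlinarith [mul_nonneg hC0.le hwz]
        have hle : slope f x z ≤ slope (fun t => s t - bb t) x z := by
          rw [slope_def_field, slope_def_field]
          gcongr
        exact lt_of_le_of_lt hle hz1
      · rw [hf'def] at hr
        simp only [dif_neg hg] at hr
        have hxU : x ∈ U := hNU (fun h => hg (h ⟨hx0, hxε⟩))
        filter_upwards [hwslope x hx0 hxU,
          Ioo_mem_nhdsGT (lt_trans hx.2 hT'T'')] with z hz1 hz2
        have hzx : x < z := hz2.1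
        have hsl : s z - s x ≤ L * (z - x) := by
          have h1 := hLip x ⟨hx0, by linarith [hx.2]⟩ z ⟨by linarith, hz2.2.le⟩
          have h2 : |z - x| = z - x := abs_of_pos (by linarith)
          rw [h2] at h1
          exact le_trans (le_abs_self _) h1
        have hbz : bb x ≤ bb z := hbmono x z hx0 hzx.le (lt_trans hz2.2 hT''ε)
        rw [slope_def_field, div_lt_iff₀ (sub_pos.2 hzx)]
        have heq : f z - f x = (s z - s x) - (bb z - bb x) - C*(w z - w x) := by
          simp only [hfdef]; ring
        rw [heq, hz1]
        nlinarith [sub_pos.2 hzx]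
    have hbound : ∀ x ∈ Ico 0 T', f x = B x → f' x < 2*K*(B x) := by
      intro x hx hfB
      have hx0 : 0 ≤ x := hx.1
      have hBx : η ≤ B x := by
        have h1 : (1:ℝ) ≤ Real.exp (2*K*x) := Real.one_le_exp (by positivity)
        rw [hBval]
        nlinarith
      have hBpos : 0 < B x := lt_of_lt_of_le hη hBx
      by_cases hg : P x
      · rw [hf'def]
        simp only [dif_pos hg]
        obtain ⟨-, hd2⟩ := hg.choose_spec
        have hφ : s x - bb x = B x + C * w x := by
          have h1 : f x = B x := hfB
          simp only [hfdef] at h1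
          linarith
        have hφpos : 0 < s x - bb x := by
          rw [hφ]
          have := mul_nonneg hC0.le (hwnn x)
          linarith
        have hK' : s x + bb x ≤ K := hKs x ⟨hx.1, hx.2.le⟩
        have hCw : C * w x < η / 2 := by
          have h1 : C * w x < C * δ := mul_lt_mul_of_pos_left (hwδ x) hC0
          have h2 : C * δ = η / 2 := by
            rw [hδdef, mul_div_assoc']
            rw [mul_comm C η, mul_div_assoc, mul_comm (2:ℝ) C, ← div_div, div_self hC0.ne']
            ring
          linarith
        have h1 : hg.choose ≤ (s x)^2 - a^2 := by linarith
        have h2 : (s x + bb x) * (s x - bb x) ≤ K * (s x - bb x) :=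
          mul_le_mul_of_nonneg_right hK' hφpos.le
        have h3 : K * (C * w x) < K * (η/2) := mul_lt_mul_of_pos_left hCw hK0
        have h4 : K * η ≤ K * B x := mul_le_mul_of_nonneg_left hBx hK0.le
        have h5 : (s x)^2 - (bb x)^2 = (s x + bb x) * (s x - bb x) := by ring
        have h6 : K * (s x - bb x) = K * B x + K * (C * w x) := by rw [hφ]; ring
        have h7 : 0 < K * B x := mul_pos hK0 hBpos
        linarith
      · rw [hf'def]
        simp only [dif_neg hg]
        have h1 : L - C = -1 := by rw [hCdef]; ring
        have h2 : 0 < 2*K*(B x) := by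
          have := mul_pos hK0 hBpos
          nlinarith
        linarith
    have key := image_le_of_liminf_slope_right_lt_deriv_boundary hfcont hf' ha0 hB hbound
    intro x hx
    have hfxB : f x ≤ B x := key hx
    have hBmax : B x ≤ η * Real.exp (2*K*T') := by
      rw [hBval]
      exact mul_le_mul_of_nonneg_left
        (Real.exp_le_exp.mpr (by nlinarith [hx.2] : 2*K*x ≤ 2*K*T')) hη.le
    have hCw : C * w x ≤ η / 2 := by
      have h1 : C * w x < C * δ := mul_lt_mul_of_pos_left (hwδ x) hC0
      have h2 : C * δ = η / 2 := by
        rw [hδdef, mul_div_assoc']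
        rw [mul_comm C η, mul_div_assoc, mul_comm (2:ℝ) C, ← div_div, div_self hC0.ne']
        ring
      linarith
    simp only [hfdef] at hfxB
    linarith
  -- conclude
  intro x hx
  by_contra hcon
  push_neg at hcon
  have hcon' : 0 < s x - bb x := by rw [hbbdef]; exact sub_pos.mpr hcon
  have hc : (0:ℝ) < Real.exp (2*K*T') + 1 := by positivity
  have h1 := main ((s x - bb x)/(2*(Real.exp (2*K*T') + 1)))
    (div_pos hcon' (by linarith)) x hx
  have h2 : (s x - bb x)/(2*(Real.exp (2*K*T') + 1)) * (Real.exp (2*K*T') + 1)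
      = (s x - bb x)/2 := by
    field_simp
  rw [h2] at h1
  linarith

theorem stmt_17 (ε a : ℝ) (hε : 0 < ε) (ha : 0 < a)
    (s : ℝ → ℝ) (hs : LocallyLipschitzOn (Ico 0 ε) s)
    (hineq : ∀ᵐ t ∂(volume : Measure ℝ), t ∈ Ico 0 ε →
      ∃ d : ℝ, HasDerivWithinAt s d (Ico 0 ε) t ∧ 0 ≤ -d + (s t) ^ 2 - a ^ 2)
    (h0 : s 0 ≤ a * coth (a * ε)) :
    (∀ t ∈ Ico 0 ε, s t ≤ a * coth (a * (ε - t))) ∧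
    (∀ T, 0 ≤ T → T < ε → ∀ t ∈ Icc 0 T, s t ≤ a * coth (a * (ε - T))) := by
  refine ⟨fun t ht => core ε a hε ha s hs hineq h0 t ht.1 ht.2 t ⟨ht.1, le_refl t⟩, ?_⟩
  intro T hT0 hTε t ht
  have h1 := core ε a hε ha s hs hineq h0 T hT0 hTε t ht
  have h2 : a * coth (a * (ε - t)) ≤ a * coth (a * (ε - T)) := by
    apply mul_le_mul_of_nonneg_left _ ha.le
    exact coth_anti (mul_pos ha (by linarith)) (by nlinarith [ht.2])
  linarith
end
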